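/- arXiv:1407.5229 — 4 statements merged into one kernel-verified Lean document; each statement's English description precedes it below -/
import Mathlib

section
/- Let U ⊂ ℝ² be open and A : U → ℝ² be C¹ with curl A = ∂₁A₂ − ∂₂A₁ = 0 on U. Let γ₀, γ₁ : [0,1] → U be C¹ closed curves (γ_i(0) = γ_i(1)) that are smoothly homotopic through closed curves in U, i.e., there is a C¹ map H : [0,1] × [0,1] → U with H(0,·) = γ₀, H(1,·) = γ₁, and H(s,0) = H(s,1) for all s. Then the circulations agree: ∫₀¹ A(γ₀(t))·γ₀'(t) dt = ∫₀¹ A(γ₁(t))·γ₁'(t) dt. In particular, when curl A = 0 outside the obstacles, the magnetic flux ∮_γ A·dx depends only on the homotopy class of γ in U. -/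
open Real Set MeasureTheory intervalIntegral

noncomputable section

/-- The dot product on `ℝ²`. -/
def dot2 (a b : ℝ × ℝ) : ℝ := a.1 * b.1 + a.2 * b.2

/-- First spatial partial derivative of a real-valued function on `ℝ²`. -/
def pdR1 (f : ℝ × ℝ → ℝ) (x : ℝ × ℝ) : ℝ := deriv (fun s => f (s, x.2)) x.1

/-- Second spatial partial derivative of a real-valued function on `ℝ²`. -/
def pdR2 (f : ℝ × ℝ → ℝ) (x : ℝ × ℝ) : ℝ := deriv (fun s => f (x.1, s)) x.2

section Aux

variable {U : Set (ℝ × ℝ)} {A : ℝ × ℝ → ℝ × ℝ}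


lemma key_fderiv (hU : IsOpen U) (hA : ContDiffOn ℝ 1 A U) {x : ℝ × ℝ} (hx : x ∈ U) :
    HasFDerivAt A (fderiv ℝ A x) x :=
  (((hA.differentiableOn one_ne_zero).differentiableAt (hU.mem_nhds hx))).hasFDerivAt

lemma curl_fderiv (hU : IsOpen U) (hA : ContDiffOn ℝ 1 A U)
    (hcurl : ∀ x ∈ U, deriv (fun s => (A (s, x.2)).2) x.1 = deriv (fun s => (A (x.1, s)).1) x.2)
    {x : ℝ × ℝ} (hx : x ∈ U) :
    (fderiv ℝ A x (1, 0)).2 = (fderiv ℝ A x (0, 1)).1 := by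
  obtain ⟨x1, x2⟩ := x
  have hD := key_fderiv hU hA hx
  have h1 : HasDerivAt (fun s : ℝ => A (s, x2)) (fderiv ℝ A (x1, x2) (1, 0)) x1 := by
    have hφ : HasDerivAt (fun s : ℝ => ((s, x2) : ℝ × ℝ)) ((1 : ℝ), (0 : ℝ)) x1 :=
      (hasDerivAt_id x1).prodMk (hasDerivAt_const _ _)
    exact hD.comp_hasDerivAt x1 hφ
  have h2 : HasDerivAt (fun s : ℝ => A (x1, s)) (fderiv ℝ A (x1, x2) (0, 1)) x2 := by
    have hφ : HasDerivAt (fun s : ℝ => ((x1, s) : ℝ × ℝ)) ((0 : ℝ), (1 : ℝ)) x2 :=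
      (hasDerivAt_const _ _).prodMk (hasDerivAt_id x2)
    exact hD.comp_hasDerivAt x2 hφ
  have e1 : deriv (fun s => (A (s, x2)).2) x1 = (fderiv ℝ A (x1, x2) (1, 0)).2 :=
    by have h := (hasFDerivAt_snd (p := A (x1, x2))).comp_hasDerivAt x1 h1; exact h.deriv
  have e2 : deriv (fun s => (A (x1, s)).1) x2 = (fderiv ℝ A (x1, x2) (0, 1)).1 :=
    by have h := (hasFDerivAt_fst (p := A (x1, x2))).comp_hasDerivAt x2 h2; exact h.deriv
  have := hcurl (x1, x2) hx
  simp only [← e1, ← e2]; exact this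


lemma green (hU : IsOpen U) (hA : ContDiffOn ℝ 1 A U)
    (hcurl2 : ∀ x ∈ U, (fderiv ℝ A x (1, 0)).2 = (fderiv ℝ A x (0, 1)).1)
    {a₁ b₁ a₂ b₂ : ℝ} (hsub : Set.uIcc a₁ b₁ ×ˢ Set.uIcc a₂ b₂ ⊆ U) :
    (∫ u in a₁..b₁, (A (u, a₂)).1) + (∫ v in a₂..b₂, (A (b₁, v)).2)
      = (∫ v in a₂..b₂, (A (a₁, v)).2) + ∫ u in a₁..b₁, (A (u, b₂)).1 := by
  have hAc : ContinuousOn A U := hA.continuousOn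
  have key := integral2_divergence_prod_of_hasFDerivAt_off_countable
    (f := fun x => (A x).2) (g := fun x => -(A x).1)
    (f' := fun x => (ContinuousLinearMap.snd ℝ ℝ ℝ).comp (fderiv ℝ A x))
    (g' := fun x => -((ContinuousLinearMap.fst ℝ ℝ ℝ).comp (fderiv ℝ A x)))
    a₁ a₂ b₁ b₂ ∅ countable_empty
    (continuous_snd.comp_continuousOn (hAc.mono hsub))
    ((continuous_fst.comp_continuousOn (hAc.mono hsub)).neg)
    ?_ ?_ ?_
  · -- conclude
    have hzero : (∫ x in a₁..b₁, ∫ y in a₂..b₂,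
        ((ContinuousLinearMap.snd ℝ ℝ ℝ).comp (fderiv ℝ A (x, y))) (1, 0)
          + (-((ContinuousLinearMap.fst ℝ ℝ ℝ).comp (fderiv ℝ A (x, y)))) (0, 1)) = 0 := by
      rw [show (0:ℝ) = ∫ x in a₁..b₁, (0:ℝ) by simp]
      refine intervalIntegral.integral_congr fun x hx => ?_
      rw [show (0:ℝ) = ∫ y in a₂..b₂, (0:ℝ) by simp]
      refine intervalIntegral.integral_congr fun y hy => ?_
      have hmem : ((x, y) : ℝ × ℝ) ∈ U := hsub (mk_mem_prod hx hy)
      have := hcurl2 _ hmem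
      simp [ContinuousLinearMap.comp_apply, this]
    rw [hzero] at key
    have h1 : (∫ x in a₁..b₁, -(A (x, b₂)).1) = -∫ x in a₁..b₁, (A (x, b₂)).1 :=
      intervalIntegral.integral_neg
    have h2 : (∫ x in a₁..b₁, -(A (x, a₂)).1) = -∫ x in a₁..b₁, (A (x, a₂)).1 :=
      intervalIntegral.integral_neg
    simp only [h1, h2] at key
    linarith [key]
  · intro x hx
    have hmem : x ∈ U := hsub ⟨Ioo_subset_Icc_self hx.1.1, Ioo_subset_Icc_self hx.1.2⟩
    exact (key_fderiv hU hA hmem).snd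
  · intro x hx
    have hmem : x ∈ U := hsub ⟨Ioo_subset_Icc_self hx.1.1, Ioo_subset_Icc_self hx.1.2⟩
    exact ((key_fderiv hU hA hmem).fst).neg
  · refine (integrableOn_zero).congr_fun (fun x hx => ?_) (measurableSet_Icc.prod measurableSet_Icc)
    have hmem : x ∈ U := hsub hx
    have := hcurl2 _ hmem
    simp [ContinuousLinearMap.comp_apply, this]


lemma between_abs {a b u c r : ℝ} (ha : |a - c| < r) (hb : |b - c| < r)
    (hu : u ∈ Set.uIcc a b) : |u - c| < r := by
  rw [Set.mem_uIcc] at hu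
  rw [abs_sub_lt_iff] at ha hb ⊢
  rcases hu with h | h <;> constructor <;> linarith [h.1, h.2, ha.1, ha.2, hb.1, hb.2]

lemma mem_ball_prod {c : ℝ × ℝ} {r : ℝ} {u v : ℝ} (hu : |u - c.1| < r) (hv : |v - c.2| < r) :
    ((u, v) : ℝ × ℝ) ∈ Metric.ball c r := by
  rw [Metric.mem_ball, Prod.dist_eq]
  exact max_lt (by rwa [Real.dist_eq]) (by rwa [Real.dist_eq])

lemma ball_coord1 {c : ℝ × ℝ} {r : ℝ} {y : ℝ × ℝ} (hy : y ∈ Metric.ball c r) :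
    |y.1 - c.1| < r := by
  rw [Metric.mem_ball, Prod.dist_eq] at hy
  have := lt_of_le_of_lt (le_max_left (dist y.1 c.1) (dist y.2 c.2)) hy
  rwa [Real.dist_eq] at this

lemma ball_coord2 {c : ℝ × ℝ} {r : ℝ} {y : ℝ × ℝ} (hy : y ∈ Metric.ball c r) :
    |y.2 - c.2| < r := by
  rw [Metric.mem_ball, Prod.dist_eq] at hy
  have := lt_of_le_of_lt (le_max_right (dist y.1 c.1) (dist y.2 c.2)) hy
  rwa [Real.dist_eq] at this

lemma horiz_intble (hAc : ContinuousOn A U) {c : ℝ × ℝ} {r : ℝ}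
    (hball : Metric.ball c r ⊆ U) {p q w : ℝ} (hp : |p - c.1| < r) (hq : |q - c.1| < r)
    (hw : |w - c.2| < r) : IntervalIntegrable (fun u => (A (u, w)).1) volume p q := by
  apply ContinuousOn.intervalIntegrable
  have h1 : ContinuousOn (fun u : ℝ => A (u, w)) (Set.uIcc p q) :=
    hAc.comp ((continuous_id.prodMk continuous_const).continuousOn)
      (fun u hu => hball (mem_ball_prod (between_abs hp hq hu) hw))
  exact continuous_fst.comp_continuousOn h1

lemma vert_intble (hAc : ContinuousOn A U) {c : ℝ × ℝ} {r : ℝ}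
    (hball : Metric.ball c r ⊆ U) {p q w : ℝ} (hp : |p - c.2| < r) (hq : |q - c.2| < r)
    (hw : |w - c.1| < r) : IntervalIntegrable (fun v => (A (w, v)).2) volume p q := by
  apply ContinuousOn.intervalIntegrable
  have h1 : ContinuousOn (fun v : ℝ => A (w, v)) (Set.uIcc p q) :=
    hAc.comp ((continuous_const.prodMk continuous_id).continuousOn)
      (fun v hv => hball (mem_ball_prod hw (between_abs hp hq hv)))
  exact continuous_snd.comp_continuousOn h1

/-- local potential -/
def pot (A : ℝ × ℝ → ℝ × ℝ) (c : ℝ × ℝ) (y : ℝ × ℝ) : ℝ :=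
  (∫ u in c.1..y.1, (A (u, c.2)).1) + ∫ v in c.2..y.2, (A (y.1, v)).2

lemma green' (hU : IsOpen U) (hA : ContDiffOn ℝ 1 A U)
    (hcurl2 : ∀ x ∈ U, (fderiv ℝ A x (1, 0)).2 = (fderiv ℝ A x (0, 1)).1)
    {a₁ b₁ a₂ b₂ : ℝ} (hsub : Set.uIcc a₁ b₁ ×ˢ Set.uIcc a₂ b₂ ⊆ U) :
    (∫ u in a₁..b₁, (A (u, a₂)).1) + (∫ v in a₂..b₂, (A (b₁, v)).2)
      = (∫ v in a₂..b₂, (A (a₁, v)).2) + ∫ u in a₁..b₁, (A (u, b₂)).1 :=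
  green hU hA hcurl2 hsub

lemma pot_sub (hU : IsOpen U) (hA : ContDiffOn ℝ 1 A U)
    (hcurl2 : ∀ x ∈ U, (fderiv ℝ A x (1, 0)).2 = (fderiv ℝ A x (0, 1)).1)
    {c : ℝ × ℝ} {r : ℝ} (hball : Metric.ball c r ⊆ U) {y z : ℝ × ℝ}
    (hy : y ∈ Metric.ball c r) (hz : z ∈ Metric.ball c r) :
    pot A c z - pot A c y
      = (∫ u in y.1..z.1, (A (u, y.2)).1) + ∫ v in y.2..z.2, (A (z.1, v)).2 := by
  have hAc : ContinuousOn A U := hA.continuousOn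
  have hr : (0 : ℝ) < r := lt_of_le_of_lt dist_nonneg (Metric.mem_ball.1 hy)
  have hc1 : |c.1 - c.1| < r := by simpa using hr
  have hc2 : |c.2 - c.2| < r := by simpa using hr
  have hy1 := ball_coord1 hy; have hy2 := ball_coord2 hy
  have hz1 := ball_coord1 hz; have hz2 := ball_coord2 hz
  have hsplit1 : (∫ u in c.1..y.1, (A (u, c.2)).1) + (∫ u in y.1..z.1, (A (u, c.2)).1)
      = ∫ u in c.1..z.1, (A (u, c.2)).1 :=
    integral_add_adjacent_intervals (horiz_intble hAc hball hc1 hy1 hc2)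
      (horiz_intble hAc hball hy1 hz1 hc2)
  have hsplit2 : (∫ v in c.2..y.2, (A (z.1, v)).2) + (∫ v in y.2..z.2, (A (z.1, v)).2)
      = ∫ v in c.2..z.2, (A (z.1, v)).2 :=
    integral_add_adjacent_intervals (vert_intble hAc hball hc2 hy2 hz1)
      (vert_intble hAc hball hy2 hz2 hz1)
  have hg : (∫ u in y.1..z.1, (A (u, c.2)).1) + (∫ v in c.2..y.2, (A (z.1, v)).2)
      = (∫ v in c.2..y.2, (A (y.1, v)).2) + ∫ u in y.1..z.1, (A (u, y.2)).1 := by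
    refine green' hU hA hcurl2 fun p hp => hball ?_
    obtain ⟨hp1, hp2⟩ := hp
    exact mem_ball_prod (between_abs hy1 hz1 hp1) (between_abs hc2 hy2 hp2)
  simp only [pot]
  linarith [hsplit1, hsplit2, hg]

def LA (A : ℝ × ℝ → ℝ × ℝ) (y : ℝ × ℝ) : ℝ × ℝ →L[ℝ] ℝ :=
  (A y).1 • ContinuousLinearMap.fst ℝ ℝ ℝ + (A y).2 • ContinuousLinearMap.snd ℝ ℝ ℝ

@[simp] lemma LA_apply (A : ℝ × ℝ → ℝ × ℝ) (y w : ℝ × ℝ) :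
    LA A y w = (A y).1 * w.1 + (A y).2 * w.2 := by
  simp [LA, smul_eq_mul]

lemma pot_hasFDerivAt (hU : IsOpen U) (hA : ContDiffOn ℝ 1 A U)
    (hcurl2 : ∀ x ∈ U, (fderiv ℝ A x (1, 0)).2 = (fderiv ℝ A x (0, 1)).1)
    {c : ℝ × ℝ} {r : ℝ} (hball : Metric.ball c r ⊆ U) {y : ℝ × ℝ}
    (hy : y ∈ Metric.ball c r) : HasFDerivAt (pot A c) (LA A y) y := by
  have hAc : ContinuousOn A U := hA.continuousOn
  have hr : (0 : ℝ) < r := lt_of_le_of_lt dist_nonneg (Metric.mem_ball.1 hy)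
  rw [hasFDerivAt_iff_isLittleO, Asymptotics.isLittleO_iff]
  intro ε hε
  have hcA : ContinuousAt A y := (hAc.continuousAt (hU.mem_nhds (hball hy)))
  obtain ⟨δ₀, hδ₀, hδcont⟩ := Metric.continuousAt_iff.1 hcA (ε / 2) (by positivity)
  have hδpos : 0 < min δ₀ (r - dist y c) := by
    apply lt_min hδ₀; rw [Metric.mem_ball] at hy; linarith
  filter_upwards [Metric.ball_mem_nhds y hδpos] with z hzb
  rw [Metric.mem_ball] at hzb
  have hzy : dist z y < δ₀ := lt_of_lt_of_le hzb (min_le_left _ _)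
  have hzball : z ∈ Metric.ball c r := by
    rw [Metric.mem_ball] at *
    calc dist z c ≤ dist z y + dist y c := dist_triangle _ _ _
      _ < min δ₀ (r - dist y c) + dist y c := by linarith
      _ ≤ (r - dist y c) + dist y c := by linarith [min_le_right δ₀ (r - dist y c)]
      _ = r := by ring
  have hy1 := ball_coord1 hy; have hy2 := ball_coord2 hy
  have hz1 := ball_coord1 hzball; have hz2 := ball_coord2 hzball
  -- distance facts
  have hd1 : dist z.1 y.1 ≤ dist z y := by rw [Prod.dist_eq]; exact le_max_left _ _
  have hd2 : dist z.2 y.2 ≤ dist z y := by rw [Prod.dist_eq]; exact le_max_right _ _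
  have hnorm1 : |z.1 - y.1| ≤ ‖z - y‖ := by
    rw [Prod.norm_def]
    exact le_trans (le_of_eq rfl) (le_max_left ‖(z - y).1‖ ‖(z - y).2‖)
  have hnorm2 : |z.2 - y.2| ≤ ‖z - y‖ := by
    rw [Prod.norm_def]
    exact le_max_right ‖(z - y).1‖ ‖(z - y).2‖
  -- rewrite the difference
  have hdiff := pot_sub hU hA hcurl2 hball hy hzball
  have hint1 : IntervalIntegrable (fun u => (A (u, y.2)).1) volume y.1 z.1 :=
    horiz_intble hAc hball hy1 hz1 hy2
  have hint2 : IntervalIntegrable (fun v => (A (z.1, v)).2) volume y.2 z.2 :=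
    vert_intble hAc hball hy2 hz2 hz1
  have e1 : (∫ u in y.1..z.1, (A (u, y.2)).1) - (A y).1 * (z.1 - y.1)
      = ∫ u in y.1..z.1, ((A (u, y.2)).1 - (A y).1) := by
    rw [intervalIntegral.integral_sub hint1 intervalIntegrable_const,
      intervalIntegral.integral_const, smul_eq_mul]
    ring
  have e2 : (∫ v in y.2..z.2, (A (z.1, v)).2) - (A y).2 * (z.2 - y.2)
      = ∫ v in y.2..z.2, ((A (z.1, v)).2 - (A y).2) := by
    rw [intervalIntegral.integral_sub hint2 intervalIntegrable_const,
      intervalIntegral.integral_const, smul_eq_mul]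
    ring
  have hb1 : ‖∫ u in y.1..z.1, ((A (u, y.2)).1 - (A y).1)‖ ≤ (ε / 2) * |z.1 - y.1| := by
    have := intervalIntegral.norm_integral_le_of_norm_le_const
      (C := ε / 2) (f := fun u => (A (u, y.2)).1 - (A y).1) (a := y.1) (b := z.1) ?_
    · exact this
    · intro u hu
      have hu' : u ∈ Set.uIcc y.1 z.1 := Set.uIoc_subset_uIcc hu
      have hdu : dist ((u, y.2) : ℝ × ℝ) y < δ₀ := by
        rw [Prod.dist_eq]
        apply max_lt
        · rw [Real.dist_eq]
          calc |u - y.1| ≤ |z.1 - y.1| := by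
                rw [Set.mem_uIcc] at hu'
                rcases hu' with ⟨h1, h2⟩ | ⟨h1, h2⟩ <;>
                  (rw [abs_le]; constructor <;>
                    linarith [le_abs_self (z.1 - y.1), neg_abs_le (z.1 - y.1)])
            _ ≤ dist z y := by rw [← Real.dist_eq]; exact hd1
            _ < δ₀ := hzy
        · simpa using hδ₀
      have := hδcont hdu
      rw [Prod.dist_eq] at this
      have h1 : dist (A (u, y.2)).1 (A y).1 < ε / 2 :=
        lt_of_le_of_lt (le_max_left _ _) this
      rw [Real.dist_eq] at h1
      exact le_of_lt (by simpa using h1)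
  have hb2 : ‖∫ v in y.2..z.2, ((A (z.1, v)).2 - (A y).2)‖ ≤ (ε / 2) * |z.2 - y.2| := by
    have := intervalIntegral.norm_integral_le_of_norm_le_const
      (C := ε / 2) (f := fun v => (A (z.1, v)).2 - (A y).2) (a := y.2) (b := z.2) ?_
    · exact this
    · intro v hv
      have hv' : v ∈ Set.uIcc y.2 z.2 := Set.uIoc_subset_uIcc hv
      have hdv : dist ((z.1, v) : ℝ × ℝ) y < δ₀ := by
        rw [Prod.dist_eq]
        apply max_lt
        · exact lt_of_le_of_lt hd1 hzy
        · rw [Real.dist_eq]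
          calc |v - y.2| ≤ |z.2 - y.2| := by
                rw [Set.mem_uIcc] at hv'
                rcases hv' with ⟨h1, h2⟩ | ⟨h1, h2⟩ <;>
                  (rw [abs_le]; constructor <;>
                    linarith [le_abs_self (z.2 - y.2), neg_abs_le (z.2 - y.2)])
            _ ≤ dist z y := by rw [← Real.dist_eq]; exact hd2
            _ < δ₀ := hzy
      have := hδcont hdv
      rw [Prod.dist_eq] at this
      have h1 : dist (A (z.1, v)).2 (A y).2 < ε / 2 :=
        lt_of_le_of_lt (le_max_right _ _) this
      rw [Real.dist_eq] at h1
      exact le_of_lt (by simpa using h1)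
  have hLA : LA A y (z - y) = (A y).1 * (z.1 - y.1) + (A y).2 * (z.2 - y.2) := by
    rw [LA_apply]; rfl
  have hsplit : pot A c z - pot A c y - LA A y (z - y)
      = (∫ u in y.1..z.1, ((A (u, y.2)).1 - (A y).1))
        + ∫ v in y.2..z.2, ((A (z.1, v)).2 - (A y).2) := by
    rw [hdiff, hLA, ← e1, ← e2]; ring
  rw [hsplit]
  calc ‖(∫ u in y.1..z.1, ((A (u, y.2)).1 - (A y).1))
        + ∫ v in y.2..z.2, ((A (z.1, v)).2 - (A y).2)‖
      ≤ ‖∫ u in y.1..z.1, ((A (u, y.2)).1 - (A y).1)‖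
        + ‖∫ v in y.2..z.2, ((A (z.1, v)).2 - (A y).2)‖ := norm_add_le _ _
    _ ≤ (ε / 2) * |z.1 - y.1| + (ε / 2) * |z.2 - y.2| := add_le_add hb1 hb2
    _ ≤ (ε / 2) * ‖z - y‖ + (ε / 2) * ‖z - y‖ := by
        have h2 : (0:ℝ) ≤ ε / 2 := by positivity
        exact add_le_add (mul_le_mul_of_nonneg_left hnorm1 h2)
          (mul_le_mul_of_nonneg_left hnorm2 h2)
    _ = ε * ‖z - y‖ := by ring

lemma line_integral_eq (hU : IsOpen U) (hA : ContDiffOn ℝ 1 A U)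
    (hcurl2 : ∀ x ∈ U, (fderiv ℝ A x (1, 0)).2 = (fderiv ℝ A x (0, 1)).1)
    {c : ℝ × ℝ} {r : ℝ} (hball : Metric.ball c r ⊆ U)
    {σ : ℝ → ℝ × ℝ} (hσ : ContDiff ℝ 1 σ) {a b : ℝ}
    (hmem : ∀ t ∈ Set.uIcc a b, σ t ∈ Metric.ball c r) :
    ∫ t in a..b, dot2 (A (σ t)) (deriv σ t) = pot A c (σ b) - pot A c (σ a) := by
  apply intervalIntegral.integral_eq_sub_of_hasDerivAt
  · intro t ht
    have hσd : HasDerivAt σ (deriv σ t) t := ((hσ.differentiable one_ne_zero) t).hasDerivAt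
    have := (pot_hasFDerivAt hU hA hcurl2 hball (hmem t ht)).comp_hasDerivAt t hσd
    exact this.congr_deriv (by simp [dot2])
  · apply ContinuousOn.intervalIntegrable
    have hAσ : ContinuousOn (fun t => A (σ t)) (Set.uIcc a b) :=
      (hA.continuousOn).comp (hσ.continuous.continuousOn) fun t ht => hball (hmem t ht)
    have hd : Continuous (deriv σ) := hσ.continuous_deriv le_rfl
    exact ((continuous_fst.comp_continuousOn hAσ).mul
        ((continuous_fst.comp hd).continuousOn)).add
      ((continuous_snd.comp_continuousOn hAσ).mul ((continuous_snd.comp hd).continuousOn))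

lemma square_step (hU : IsOpen U) (hA : ContDiffOn ℝ 1 A U)
    (hcurl2 : ∀ x ∈ U, (fderiv ℝ A x (1, 0)).2 = (fderiv ℝ A x (0, 1)).1)
    {c : ℝ × ℝ} {r : ℝ} (hball : Metric.ball c r ⊆ U)
    {H : ℝ → ℝ → ℝ × ℝ} (hH : ContDiff ℝ 1 fun p : ℝ × ℝ => H p.1 p.2)
    {s₁ s₂ t₁ t₂ : ℝ}
    (hmem : ∀ s ∈ Set.uIcc s₁ s₂, ∀ t ∈ Set.uIcc t₁ t₂, H s t ∈ Metric.ball c r) :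
    (∫ t in t₁..t₂, dot2 (A (H s₂ t)) (deriv (fun t' => H s₂ t') t))
      - (∫ t in t₁..t₂, dot2 (A (H s₁ t)) (deriv (fun t' => H s₁ t') t))
    = (∫ s in s₁..s₂, dot2 (A (H s t₂)) (deriv (fun s' => H s' t₂) s))
      - (∫ s in s₁..s₂, dot2 (A (H s t₁)) (deriv (fun s' => H s' t₁) s)) := by
  have hct : ∀ s, ContDiff ℝ 1 fun t => H s t := fun s =>
    hH.comp (contDiff_const.prodMk contDiff_id)
  have hcs : ∀ t, ContDiff ℝ 1 fun s => H s t := fun t =>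
    hH.comp (contDiff_id.prodMk contDiff_const)
  rw [line_integral_eq hU hA hcurl2 hball (hct s₂)
      (fun t ht => hmem s₂ Set.right_mem_uIcc t ht),
    line_integral_eq hU hA hcurl2 hball (hct s₁)
      (fun t ht => hmem s₁ Set.left_mem_uIcc t ht),
    line_integral_eq hU hA hcurl2 hball (hcs t₂)
      (fun s hs => hmem s hs t₂ Set.right_mem_uIcc),
    line_integral_eq hU hA hcurl2 hball (hcs t₁)
      (fun s hs => hmem s hs t₁ Set.left_mem_uIcc)]
  ring

end Aux

/-- Homotopy invariance of the circulation of a curl-free `C¹` vector field: if two `C¹`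
closed curves in `U` are `C¹`-homotopic through closed curves in `U`, then they have the
same circulation `∮ A·dx`. -/
theorem circulation_homotopy_invariant
    (U : Set (ℝ × ℝ)) (hU : IsOpen U)
    (A : ℝ × ℝ → ℝ × ℝ) (hA : ContDiffOn ℝ 1 A U)
    (hcurl : ∀ x ∈ U, pdR1 (fun y => (A y).2) x = pdR2 (fun y => (A y).1) x)
    (γ₀ γ₁ : ℝ → ℝ × ℝ) (hγ₀ : ContDiff ℝ 1 γ₀) (hγ₁ : ContDiff ℝ 1 γ₁)
    (hclosed₀ : γ₀ 0 = γ₀ 1) (hclosed₁ : γ₁ 0 = γ₁ 1)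
    (H : ℝ → ℝ → ℝ × ℝ) (hH : ContDiff ℝ 1 (fun p : ℝ × ℝ => H p.1 p.2))
    (hH0 : ∀ t ∈ Set.Icc (0 : ℝ) 1, H 0 t = γ₀ t)
    (hH1 : ∀ t ∈ Set.Icc (0 : ℝ) 1, H 1 t = γ₁ t)
    (hHclosed : ∀ s ∈ Set.Icc (0 : ℝ) 1, H s 0 = H s 1)
    (hHU : ∀ s ∈ Set.Icc (0 : ℝ) 1, ∀ t ∈ Set.Icc (0 : ℝ) 1, H s t ∈ U) :
    (∫ t in (0 : ℝ)..1, dot2 (A (γ₀ t)) (deriv γ₀ t))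
      = ∫ t in (0 : ℝ)..1, dot2 (A (γ₁ t)) (deriv γ₁ t) := by
  have hcurl2 : ∀ x ∈ U, (fderiv ℝ A x (1, 0)).2 = (fderiv ℝ A x (0, 1)).1 :=
    fun x hx => curl_fderiv hU hA hcurl hx
  -- the closed square
  set Q : Set (ℝ × ℝ) := Set.Icc (0 : ℝ) 1 ×ˢ Set.Icc (0 : ℝ) 1 with hQ
  have hQc : IsCompact Q := isCompact_Icc.prod isCompact_Icc
  -- radii
  have hex : ∀ i : {p : ℝ × ℝ // p ∈ Q}, ∃ ρ, 0 < ρ ∧ Metric.ball (H i.1.1 i.1.2) ρ ⊆ U := by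
    intro i
    have hiU : H i.1.1 i.1.2 ∈ U := hHU _ i.2.1 _ i.2.2
    obtain ⟨ρ, hρ, hsub⟩ := Metric.isOpen_iff.1 hU _ hiU
    exact ⟨ρ, hρ, hsub⟩
  choose ρ hρpos hρsub using hex
  have hcov : Q ⊆ ⋃ i : {p : ℝ × ℝ // p ∈ Q},
      (fun p : ℝ × ℝ => H p.1 p.2) ⁻¹' Metric.ball (H i.1.1 i.1.2) (ρ i) := by
    intro p hp
    exact Set.mem_iUnion.2 ⟨⟨p, hp⟩, Metric.mem_ball_self (hρpos ⟨p, hp⟩)⟩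
  obtain ⟨δ, hδpos, hLeb⟩ := lebesgue_number_lemma_of_metric hQc
    (fun i => Metric.isOpen_ball.preimage hH.continuous) hcov
  obtain ⟨n, hn⟩ := exists_nat_one_div_lt hδpos
  set N : ℕ := n + 1 with hN
  have hNpos : (0 : ℝ) < N := by positivity
  set a : ℕ → ℝ := fun k => k / N with ha
  have ha0 : a 0 = 0 := by simp [ha]
  have haN : a N = 1 := by show (N:ℝ) / N = 1; exact div_self hNpos.ne'
  have hamem : ∀ k ≤ N, a k ∈ Set.Icc (0 : ℝ) 1 := by
    intro k hk
    constructor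
    · positivity
    · rw [div_le_one hNpos]; exact_mod_cast hk
  have hgap : ∀ k : ℕ, a (k + 1) - a k = 1 / N := by
    intro k; show ((k+1:ℕ):ℝ) / N - (k:ℝ) / N = 1 / N; rw [← sub_div]; push_cast; ring
  have hmono : ∀ k : ℕ, a k ≤ a (k + 1) := by
    intro k
    have h01 : (0:ℝ) < 1 / N := by positivity
    linarith [hgap k]
  have hgapδ : (1 : ℝ) / N < δ := by
    rw [hN]; push_cast; exact hn
  -- curves are C¹
  have hct : ∀ s, ContDiff ℝ 1 fun t => H s t := fun s =>
    hH.comp (contDiff_const.prodMk contDiff_id)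
  -- integrand in t and integrability
  set P : ℝ → ℝ → ℝ := fun s t => dot2 (A (H s t)) (deriv (fun t' => H s t') t) with hP
  have hPcont : ∀ s ∈ Set.Icc (0 : ℝ) 1, ContinuousOn (P s) (Set.Icc (0 : ℝ) 1) := by
    intro s hs
    have hAσ : ContinuousOn (fun t => A (H s t)) (Set.Icc (0 : ℝ) 1) :=
      hA.continuousOn.comp ((hct s).continuous.continuousOn) fun t ht => hHU s hs t ht
    have hd : Continuous (deriv fun t' => H s t') := (hct s).continuous_deriv le_rfl
    exact ((continuous_fst.comp_continuousOn hAσ).mul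
        ((continuous_fst.comp hd).continuousOn)).add
      ((continuous_snd.comp_continuousOn hAσ).mul ((continuous_snd.comp hd).continuousOn))
  have hPint : ∀ s ∈ Set.Icc (0 : ℝ) 1, ∀ u ∈ Set.Icc (0:ℝ) 1, ∀ v ∈ Set.Icc (0:ℝ) 1,
      IntervalIntegrable (P s) volume u v := by
    intro s hs u hu v hv
    exact ((hPcont s hs).mono (Set.ordConnected_Icc.uIcc_subset hu hv)).intervalIntegrable
  set I : ℝ → ℝ := fun s => ∫ t in (0 : ℝ)..1, P s t with hI
  -- the key step
  have hstep : ∀ j < N, I (a (j + 1)) = I (a j) := by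
    intro j hj
    have hj1 : j + 1 ≤ N := hj
    have hajm := hamem j hj.le
    have haj1m := hamem (j + 1) hj1
    set g : ℝ → ℝ := fun t => ∫ s in a j..a (j + 1),
      dot2 (A (H s t)) (deriv (fun s' => H s' t) s) with hg
    have hsq : ∀ k < N,
        (∫ t in a k..a (k + 1), P (a (j + 1)) t) - (∫ t in a k..a (k + 1), P (a j) t)
          = g (a (k + 1)) - g (a k) := by
      intro k hk
      have hpQ : ((a j, a k) : ℝ × ℝ) ∈ Q := Set.mk_mem_prod hajm (hamem k hk.le)
      obtain ⟨i, hi⟩ := hLeb (a j, a k) hpQ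
      have hmem : ∀ s ∈ Set.uIcc (a j) (a (j + 1)), ∀ t ∈ Set.uIcc (a k) (a (k + 1)),
          H s t ∈ Metric.ball (H i.1.1 i.1.2) (ρ i) := by
        intro s hs t ht
        refine hi (?_ : ((s, t) : ℝ × ℝ) ∈ Metric.ball ((a j, a k) : ℝ × ℝ) δ)
        rw [Metric.mem_ball, Prod.dist_eq]
        rw [Set.uIcc_of_le (hmono j)] at hs
        rw [Set.uIcc_of_le (hmono k)] at ht
        apply max_lt
        · rw [Real.dist_eq]
          have h1 : |s - a j| ≤ 1 / N := by
            apply abs_le.2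
            constructor
            · have : (0:ℝ) < 1 / N := by positivity
              linarith [hs.1]
            · linarith [hs.2, hgap j]
          linarith
        · rw [Real.dist_eq]
          have h1 : |t - a k| ≤ 1 / N := by
            apply abs_le.2
            constructor
            · have : (0:ℝ) < 1 / N := by positivity
              linarith [ht.1]
            · linarith [ht.2, hgap k]
          linarith
      exact square_step hU hA hcurl2 (hρsub i) hH hmem
    -- sum up
    have hsum1 : ∑ k ∈ Finset.range N, (∫ t in a k..a (k + 1), P (a (j+1)) t) = I (a (j+1)) := by
      rw [hI]
      have := intervalIntegral.sum_integral_adjacent_intervals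
        (a := a) (n := N) (f := P (a (j+1)))
        (fun k hk => hPint _ haj1m _ (hamem k hk.le) _ (hamem (k+1) hk))
      rw [ha0, haN] at this; exact this
    have hsum2 : ∑ k ∈ Finset.range N, (∫ t in a k..a (k + 1), P (a j) t) = I (a j) := by
      rw [hI]
      have := intervalIntegral.sum_integral_adjacent_intervals
        (a := a) (n := N) (f := P (a j))
        (fun k hk => hPint _ hajm _ (hamem k hk.le) _ (hamem (k+1) hk))
      rw [ha0, haN] at this; exact this
    have htel : ∑ k ∈ Finset.range N, (g (a (k + 1)) - g (a k)) = g (a N) - g (a 0) :=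
      Finset.sum_range_sub (fun k => g (a k)) N
    have hclose : g (a N) = g (a 0) := by
      rw [haN, ha0, hg]
      apply intervalIntegral.integral_congr_ae
      have hae : ∀ᵐ s : ℝ, s ∉ ({0, 1} : Set ℝ) :=
        (Set.countable_insert.2 (Set.countable_singleton 1)).ae_notMem volume
      filter_upwards [hae] with s hs hsI
      have hsmem : s ∈ Set.Icc (0:ℝ) 1 := by
        have h1 : Set.uIoc (a j) (a (j+1)) ⊆ Set.uIcc (a j) (a (j+1)) := Set.uIoc_subset_uIcc
        exact Set.ordConnected_Icc.uIcc_subset hajm haj1m (h1 hsI)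
      have hs0 : s ≠ 0 := fun h => hs (by simp [h])
      have hs1 : s ≠ 1 := fun h => hs (by simp [h])
      have hsoo : s ∈ Set.Ioo (0:ℝ) 1 :=
        ⟨lt_of_le_of_ne hsmem.1 (Ne.symm hs0), lt_of_le_of_ne hsmem.2 hs1⟩
      have hev : (fun s' => H s' 1) =ᶠ[nhds s] fun s' => H s' 0 := by
        filter_upwards [Filter.mem_of_superset (Ioo_mem_nhds hsoo.1 hsoo.2)
          Set.Ioo_subset_Icc_self] with s' hs'
        exact (hHclosed s' hs').symm
      rw [hev.deriv_eq, hHclosed s hsmem]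
    have := Finset.sum_congr rfl (fun k hk => hsq k (Finset.mem_range.1 hk))
    rw [htel, hclose, sub_self] at this
    rw [Finset.sum_sub_distrib, hsum1, hsum2] at this
    linarith [this]
  -- induction
  have hind : ∀ j ≤ N, I (a j) = I (a 0) := by
    intro j hj
    induction j with
    | zero => rfl
    | succ k ih =>
      rw [hstep k (by omega), ih (by omega)]
  have hmain : I 1 = I 0 := by
    have := hind N le_rfl
    rwa [haN, ha0] at this
  -- identify endpoints
  have hae : ∀ᵐ t : ℝ, t ∉ ({0, 1} : Set ℝ) :=
    (Set.countable_insert.2 (Set.countable_singleton 1)).ae_notMem volume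
  have hmemIoo : ∀ t : ℝ, t ∉ ({0, 1} : Set ℝ) → t ∈ Set.uIoc (0:ℝ) 1 → t ∈ Set.Ioo (0:ℝ) 1 := by
    intro t ht htI
    rw [Set.uIoc_of_le zero_le_one] at htI
    exact ⟨htI.1, lt_of_le_of_ne htI.2 fun h => ht (by simp [h])⟩
  have hI0 : I 0 = ∫ t in (0:ℝ)..1, dot2 (A (γ₀ t)) (deriv γ₀ t) := by
    apply intervalIntegral.integral_congr_ae
    filter_upwards [hae] with t ht htI
    have htoo := hmemIoo t ht htI
    have hev : (fun t' => H 0 t') =ᶠ[nhds t] γ₀ := by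
      filter_upwards [Filter.mem_of_superset (Ioo_mem_nhds htoo.1 htoo.2)
        Set.Ioo_subset_Icc_self] with t' ht'
      exact hH0 t' ht'
    show dot2 (A (H 0 t)) (deriv (fun t' => H 0 t') t) = dot2 (A (γ₀ t)) (deriv γ₀ t)
    rw [hev.deriv_eq, hH0 t (Set.Ioo_subset_Icc_self htoo)]
  have hI1 : I 1 = ∫ t in (0:ℝ)..1, dot2 (A (γ₁ t)) (deriv γ₁ t) := by
    apply intervalIntegral.integral_congr_ae
    filter_upwards [hae] with t ht htI
    have htoo := hmemIoo t ht htI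
    have hev : (fun t' => H 1 t') =ᶠ[nhds t] γ₁ := by
      filter_upwards [Filter.mem_of_superset (Ioo_mem_nhds htoo.1 htoo.2)
        Set.Ioo_subset_Icc_self] with t' ht'
      exact hH1 t' ht'
    show dot2 (A (H 1 t)) (deriv (fun t' => H 1 t') t) = dot2 (A (γ₁ t)) (deriv γ₁ t)
    rw [hev.deriv_eq, hH1 t (Set.Ioo_subset_Icc_self htoo)]
  rw [← hI0, ← hI1, hmain]

end
end

section
/- Let w : ℝ → ℂ be twice continuously differentiable with compact support, and for t > 0 set u(t) = (e^{−iπ/4}√m /√(2πħt)) ∫_ℝ exp(i m s²/(2ħt)) w(s) ds. Then u is differentiable on (0,∞) and −iħ u'(t) = (e^{−iπ/4}√m /√(2πħt)) ∫_ℝ exp(i m s²/(2ħt)) · (ħ²/(2m)) w''(s) ds for all t > 0. (This is the key identity behind the Kannai transmutation formula: applying −iħ∂ₜ under the integral is the same as applying (ħ²/(2m))∂²ₛ to w.) -/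
open Real Set MeasureTheory

noncomputable section

/-- Pointwise algebraic identity underlying the Kannai transmutation. -/
lemma kannai_pointwise (hbar m t s : ℝ) (hh : hbar ≠ 0) (hm : m ≠ 0) (ht : t ≠ 0) (φ ws : ℂ)
    (k : ℂ) (hk : k = Complex.I * m / (2*hbar*t)) (b : ℂ)
    (hb : b = Complex.I * m * s^2 / (2*hbar)) :
    ((hbar:ℂ)^2/(2*m)) * ((2*k*φ + (k*(2*s))^2 * φ) * ws)
      = (Complex.I*hbar/(2*t)) * (φ * ws) + (-(Complex.I)*hbar) * (b * (-1/(t:ℂ)^2) * φ * ws) := by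
  subst hk hb
  have hh' : (hbar:ℂ) ≠ 0 := by exact_mod_cast hh
  have hm' : (m:ℂ) ≠ 0 := by exact_mod_cast hm
  have ht' : (t:ℂ) ≠ 0 := by exact_mod_cast ht
  field_simp

/-- Scalar identity for the prefactor. -/
lemma kannai_scalar (hbar t : ℝ) (hh : hbar ≠ 0) (ht : t ≠ 0) (A R ρ J0 g' : ℂ) (hR : R ≠ 0)
    (hρ : ρ * R = Real.pi * hbar) (hR2 : R^2 = 2 * Real.pi * hbar * t) :
    (-(Complex.I) * hbar) * (A * (-ρ/R^2) * J0 + (A/R) * g')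
      = (A/R) * ((Complex.I*hbar/(2*t)) * J0 + (-(Complex.I)*hbar) * g') := by
  have hπ : (Real.pi:ℂ) ≠ 0 := by exact_mod_cast Real.pi_ne_zero
  have hh' : (hbar:ℂ) ≠ 0 := by exact_mod_cast hh
  have ht' : (t:ℂ) ≠ 0 := by exact_mod_cast ht
  have hkey : ρ * (2*t) = R :=
    mul_right_cancel₀ hR (by linear_combination (2*(t:ℂ))*hρ - hR2)
  have hρ' : ρ = R/(2*t) := (eq_div_iff (mul_ne_zero two_ne_zero ht')).mpr hkey
  rw [hρ']
  field_simp
  ring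

/-- The Kannai transmutation identity: for `w : ℝ → ℂ` twice continuously differentiable
with compact support and
`u(t) = (e^{-iπ/4}√m/√(2πħt)) ∫_ℝ exp(i m s²/(2ħt)) w(s) ds` for `t > 0`,
the function `u` is differentiable on `(0,∞)` and
`-iħ u'(t) = (e^{-iπ/4}√m/√(2πħt)) ∫_ℝ exp(i m s²/(2ħt)) (ħ²/(2m)) w''(s) ds`. -/
theorem kannai_time_derivative
    (hbar m : ℝ) (hhbar : 0 < hbar) (hm : 0 < m)
    (w : ℝ → ℂ) (hw : ContDiff ℝ 2 w) (hwsupp : HasCompactSupport w)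
    (u : ℝ → ℂ)
    (hu : ∀ t : ℝ, 0 < t →
      u t = (Complex.exp (-(Complex.I * Real.pi / 4)) * (Real.sqrt m : ℂ) /
              (Real.sqrt (2 * Real.pi * hbar * t) : ℂ)) *
            ∫ s : ℝ, Complex.exp (Complex.I * m * s ^ 2 / (2 * hbar * t)) * w s) :
    ∀ t : ℝ, 0 < t → ∃ d : ℂ, HasDerivAt u d t ∧
      (-(Complex.I) * (hbar : ℂ)) * d =
        (Complex.exp (-(Complex.I * Real.pi / 4)) * (Real.sqrt m : ℂ) /
          (Real.sqrt (2 * Real.pi * hbar * t) : ℂ)) *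
        ∫ s : ℝ, Complex.exp (Complex.I * m * s ^ 2 / (2 * hbar * t)) *
          (((hbar : ℂ) ^ 2 / (2 * m)) * deriv (deriv w) s) := by
  intro t ht
  have hπ : (0:ℝ) < Real.pi := Real.pi_pos
  have ht' : t ≠ 0 := ne_of_gt ht
  have hh' : hbar ≠ 0 := ne_of_gt hhbar
  have hm' : m ≠ 0 := ne_of_gt hm
  -- basic facts about w
  have hw2 : ContDiff ℝ ((1:ℕ) + (1:ℕ) : ℕ) w := by exact_mod_cast hw
  have hwd : Differentiable ℝ w := hw.differentiable (by norm_num)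
  have hd1 : ContDiff ℝ 1 (deriv w) := by
    have := ContDiff.iterate_deriv' 1 1 hw2
    simpa using this
  have hdwd : Differentiable ℝ (deriv w) := hd1.differentiable (by norm_num)
  have hwc : Continuous w := hw.continuous
  have hdwc : Continuous (deriv w) := hd1.continuous
  have hddwc : Continuous (deriv (deriv w)) := hd1.continuous_deriv le_rfl
  have hdws : HasCompactSupport (deriv w) := hwsupp.deriv
  have hddws : HasCompactSupport (deriv (deriv w)) := hdws.deriv
  -- integrability helper
  have hint : ∀ (f g : ℝ → ℂ), Continuous f → Continuous g → HasCompactSupport g →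
      Integrable (fun s : ℝ => f s * g s) := by
    intro f g hf hg hgs
    exact (hf.mul hg).integrable_of_hasCompactSupport (hgs.mul_left)
  -- the oscillatory kernel at time t and its s-derivatives
  set k : ℂ := Complex.I * (m:ℂ) / (2*(hbar:ℂ)*(t:ℂ)) with hk
  set φ : ℝ → ℂ := fun s : ℝ => Complex.exp (k * (s:ℂ)^2) with hφ
  have hφk : ∀ s : ℝ, Complex.I * (m:ℂ) * (s:ℂ) ^ 2 / (2 * (hbar:ℂ) * (t:ℂ)) = k * (s:ℂ)^2 := by
    intro s; rw [hk]; ring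
  have hφs : ∀ s : ℝ,
      Complex.exp (Complex.I * (m:ℂ) * (s:ℂ) ^ 2 / (2 * (hbar:ℂ) * (t:ℂ))) = φ s := by
    intro s; rw [hφ]; exact congrArg Complex.exp (hφk s)
  have hφ' : ∀ s : ℝ, HasDerivAt φ (k * 2 * (s:ℂ) * φ s) s := by
    intro s
    have h1 : HasDerivAt (fun z : ℂ => Complex.exp (k * z^2))
        (k * 2 * (s:ℂ) * Complex.exp (k * (s:ℂ)^2)) (s:ℂ) := by
      have h0 := ((hasDerivAt_pow 2 (s:ℂ)).const_mul k).cexp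
      exact h0.congr_deriv (by push_cast; ring)
    rw [hφ]
    exact h1.comp_ofReal
  have hcoord : ∀ s : ℝ, HasDerivAt (fun y : ℝ => k * 2 * (y:ℂ)) (k * 2) s := by
    intro s
    have h0 : HasDerivAt (fun z : ℂ => k * 2 * z) (k * 2) (s:ℂ) := by
      simpa using (hasDerivAt_id (s:ℂ)).const_mul (k*2)
    exact h0.comp_ofReal
  have hφ'' : ∀ s : ℝ, HasDerivAt (fun y : ℝ => k * 2 * (y:ℂ) * φ y)
      (k * 2 * φ s + k * 2 * (s:ℂ) * (k * 2 * (s:ℂ) * φ s)) s := by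
    intro s
    exact (hcoord s).mul (hφ' s)
  have hφcont : Continuous φ := by
    rw [hφ]
    exact Complex.continuous_exp.comp (by fun_prop)
  have hdφcont : Continuous (fun s : ℝ => k * 2 * (s:ℂ) * φ s) := by fun_prop
  have hddφcont : Continuous
      (fun s : ℝ => k * 2 * φ s + k * 2 * (s:ℂ) * (k * 2 * (s:ℂ) * φ s)) := by fun_prop
  -- the prefactor
  set A : ℂ := Complex.exp (-(Complex.I * Real.pi / 4)) * (Real.sqrt m : ℂ) with hA
  set c : ℝ → ℂ := fun τ : ℝ => A / (Real.sqrt (2 * Real.pi * hbar * τ) : ℂ) with hc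
  set g : ℝ → ℂ := fun τ : ℝ =>
    ∫ s : ℝ, Complex.exp (Complex.I * m * s ^ 2 / (2 * hbar * τ)) * w s with hg
  set R : ℝ := Real.sqrt (2 * Real.pi * hbar * t) with hR
  have hRpos : 0 < R := Real.sqrt_pos.mpr (by positivity)
  have hR0 : (R:ℂ) ≠ 0 := by exact_mod_cast ne_of_gt hRpos
  have hRsq : (R:ℝ)^2 = 2 * Real.pi * hbar * t := Real.sq_sqrt (by positivity)
  set ρ : ℝ := 1/(2*Real.sqrt (2 * Real.pi * hbar * t)) * (2 * Real.pi * hbar) with hρdef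
  have hρR : ρ * R = Real.pi * hbar := by
    have h0 : Real.sqrt (2 * Real.pi * hbar * t) ≠ 0 := by
      rw [← hR]; exact ne_of_gt hRpos
    rw [hρdef, hR]
    field_simp
  -- derivative of the prefactor
  have hcder : HasDerivAt c (A * (-(ρ:ℂ) / (R:ℂ)^2)) t := by
    have h2 : HasDerivAt (fun τ : ℝ => 2 * Real.pi * hbar * τ) (2 * Real.pi * hbar) t := by
      simpa using (hasDerivAt_id t).const_mul (2 * Real.pi * hbar)
    have h1 : HasDerivAt Real.sqrt (1/(2*Real.sqrt (2 * Real.pi * hbar * t)))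
        (2 * Real.pi * hbar * t) := Real.hasDerivAt_sqrt (by positivity)
    have hre : HasDerivAt (fun τ : ℝ => Real.sqrt (2 * Real.pi * hbar * τ)) ρ t := by
      rw [hρdef]; exact h1.comp t h2
    have hcc : HasDerivAt (fun τ : ℝ => ((Real.sqrt (2 * Real.pi * hbar * τ) : ℝ) : ℂ))
        ((ρ:ℝ):ℂ) t := hre.ofReal_comp
    have hq : HasDerivAt (fun z : ℂ => A * z⁻¹)
        (A * (-1/((Real.sqrt (2 * Real.pi * hbar * t) : ℝ):ℂ)^2))
        ((Real.sqrt (2 * Real.pi * hbar * t) : ℝ):ℂ) := by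
      have hne : ((Real.sqrt (2 * Real.pi * hbar * t) : ℝ):ℂ) ≠ 0 := by rw [← hR]; exact hR0
      have := ((hasDerivAt_id (((Real.sqrt (2 * Real.pi * hbar * t) : ℝ):ℂ))).inv hne).const_mul A
      exact this
    have hcomp := hq.comp t hcc
    have hfun : ((fun z : ℂ => A * z⁻¹) ∘
        (fun τ : ℝ => ((Real.sqrt (2 * Real.pi * hbar * τ) : ℝ) : ℂ))) = c := by
      funext τ
      simp [hc, div_eq_mul_inv, Function.comp]
    rw [hfun] at hcomp
    refine hcomp.congr_deriv ?_
    rw [hR]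
    ring
  -- derivative of the integral, by differentiation under the integral sign
  set F' : ℝ → ℝ → ℂ := fun τ s =>
    Complex.I * (m:ℂ) * (s:ℂ)^2 / (2*(hbar:ℂ)) * (-1/(τ:ℂ)^2) *
      Complex.exp (Complex.I * m * s ^ 2 / (2 * hbar * τ)) * w s with hF'
  have hFcont : ∀ τ : ℝ, Continuous
      (fun s : ℝ => Complex.exp (Complex.I * m * s ^ 2 / (2 * hbar * (τ:ℝ))) * w s) := by
    intro τ
    have : Continuous (fun s : ℝ => Complex.exp (Complex.I * m * s ^ 2 / (2 * hbar * (τ:ℝ)))) :=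
      Complex.continuous_exp.comp (by fun_prop)
    exact this.mul hwc
  have hmeas : ∀ᶠ τ in nhds t, AEStronglyMeasurable
      (fun s : ℝ => Complex.exp (Complex.I * m * s ^ 2 / (2 * hbar * (τ:ℝ))) * w s) volume := by
    filter_upwards with τ
    exact (hFcont τ).aestronglyMeasurable
  have hFint : Integrable
      (fun s : ℝ => Complex.exp (Complex.I * m * s ^ 2 / (2 * hbar * (t:ℝ))) * w s) volume := by
    apply hint _ w _ hwc hwsupp
    exact Complex.continuous_exp.comp (by fun_prop)
  have hF'meas : AEStronglyMeasurable (F' t) volume := by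
    apply Continuous.aestronglyMeasurable
    rw [hF']
    apply Continuous.mul _ hwc
    apply Continuous.mul (by fun_prop)
    exact Complex.continuous_exp.comp (by fun_prop)
  have hbound : ∀ᵐ s : ℝ ∂volume, ∀ τ ∈ Metric.ball t (t/2),
      ‖F' τ s‖ ≤ m * s^2 / (2*hbar) * (4/t^2) * ‖w s‖ := by
    filter_upwards with s
    intro τ hτ
    have h1 : t/2 < τ := by
      have := abs_lt.mp (mem_ball_iff_norm.mp hτ)
      linarith [this.1]
    have hτ0 : 0 < τ := by linarith
    have hnorm1 : ‖Complex.exp (Complex.I * m * s ^ 2 / (2 * hbar * (τ:ℝ)))‖ = 1 := by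
      have harg : Complex.I * (m:ℂ) * (s:ℂ)^2 / (2*(hbar:ℂ)*(τ:ℂ))
          = ((m*s^2/(2*hbar*τ) : ℝ) : ℂ) * Complex.I := by push_cast; ring
      rw [harg, Complex.norm_exp_ofReal_mul_I]
    rw [hF']
    simp only [norm_mul, hnorm1, mul_one]
    have e1 : ‖Complex.I * (m:ℂ) * (s:ℂ)^2 / (2*(hbar:ℂ))‖ = m * s^2 / (2*hbar) := by
      simp [norm_div, norm_mul, abs_of_pos hm, abs_of_pos hhbar, sq_abs]
    have e2 : ‖(-1/((τ:ℝ):ℂ)^2 : ℂ)‖ = 1/τ^2 := by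
      simp [norm_div, sq_abs, abs_of_pos hτ0]
    rw [e1, e2]
    have hle : 1/τ^2 ≤ 4/t^2 := by
      rw [div_le_div_iff₀ (by positivity) (by positivity)]
      nlinarith
    have hb0 : 0 ≤ m * s^2 / (2*hbar) := by positivity
    have hmono := mul_le_mul_of_nonneg_left hle hb0
    exact mul_le_mul_of_nonneg_right hmono (norm_nonneg _)
  have hboundint : Integrable (fun s : ℝ => m * s^2 / (2*hbar) * (4/t^2) * ‖w s‖) volume := by
    apply Continuous.integrable_of_hasCompactSupport
    · fun_prop
    · exact (hwsupp.norm).mul_left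
  have hdiff : ∀ᵐ s : ℝ ∂volume, ∀ τ ∈ Metric.ball t (t/2),
      HasDerivAt (fun τ : ℝ => Complex.exp (Complex.I * m * s ^ 2 / (2 * hbar * (τ:ℝ))) * w s)
        (F' τ s) τ := by
    filter_upwards with s
    intro τ hτ
    have h1 : t/2 < τ := by
      have := abs_lt.mp (mem_ball_iff_norm.mp hτ)
      linarith [this.1]
    have hτ0 : τ ≠ 0 := by intro h; rw [h] at h1; linarith
    set b : ℂ := Complex.I * (m:ℂ) * (s:ℂ)^2 / (2*(hbar:ℂ)) with hb
    have hbτ : ∀ σ : ℝ, b * ((σ:ℂ))⁻¹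
        = Complex.I * (m:ℂ) * (s:ℂ)^2 / (2*(hbar:ℂ)*(σ:ℂ)) := by
      intro σ; rw [hb, ← div_eq_mul_inv, div_div]
    have h2 : HasDerivAt (fun z : ℂ => Complex.exp (b * z⁻¹))
        (b * (-1/((τ:ℝ):ℂ)^2) * Complex.exp (b * (((τ:ℝ):ℂ))⁻¹)) ((τ:ℝ):ℂ) := by
      have hzinv : HasDerivAt (fun z : ℂ => z⁻¹) (-1/((τ:ℝ):ℂ)^2) ((τ:ℝ):ℂ) := by
        exact (hasDerivAt_id ((τ:ℝ):ℂ)).inv (Complex.ofReal_ne_zero.mpr hτ0)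
      have := (hzinv.const_mul b).cexp
      exact this.congr_deriv (by ring)
    have h3 := (h2.comp_ofReal).mul_const (w s)
    have hfun : (fun σ : ℝ => Complex.exp (b * ((σ:ℂ))⁻¹) * w s)
        = fun σ : ℝ => Complex.exp (Complex.I * m * s ^ 2 / (2 * hbar * (σ:ℝ))) * w s := by
      funext σ
      rw [hbτ σ]
    rw [hfun] at h3
    have hval : b * (-1/((τ:ℝ):ℂ)^2) * Complex.exp (b * (((τ:ℝ):ℂ))⁻¹) * w s = F' τ s := by
      rw [hbτ τ, hF', hb]
    rwa [hval] at h3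
  have key := hasDerivAt_integral_of_dominated_loc_of_deriv_le (𝕜 := ℝ) (μ := volume)
    (F := fun τ s => Complex.exp (Complex.I * m * s ^ 2 / (2 * hbar * (τ:ℝ))) * w s)
    (F' := F') (x₀ := t) (s := Metric.ball t (t/2))
    (bound := fun s => m * s^2 / (2*hbar) * (4/t^2) * ‖w s‖)
    (Metric.ball_mem_nhds t (by positivity)) hmeas hFint hF'meas hbound hboundint hdiff
  obtain ⟨hF'int, hgder⟩ := key
  have hgder' : HasDerivAt g (∫ s : ℝ, F' t s) t := hgder
  have hprod := hcder.mul hgder'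
  have hueq : u =ᶠ[nhds t] (fun τ : ℝ => c τ * g τ) := by
    filter_upwards [Ioi_mem_nhds ht] with τ hτ
    exact hu τ hτ
  have hud : HasDerivAt u (A * (-(ρ:ℂ) / (R:ℂ)^2) * g t + c t * ∫ s : ℝ, F' t s) t :=
    hprod.congr_of_eventuallyEq hueq
  refine ⟨_, hud, ?_⟩
  -- integration by parts twice
  have hwder : ∀ x : ℝ, HasDerivAt w (deriv w x) x := fun x => (hwd x).hasDerivAt
  have hdwder : ∀ x : ℝ, HasDerivAt (deriv w) (deriv (deriv w) x) x :=
    fun x => (hdwd x).hasDerivAt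
  have ibp1 : ∫ s : ℝ, φ s * deriv (deriv w) s
      = - ∫ s : ℝ, (k * 2 * (s:ℂ) * φ s) * deriv w s :=
    integral_mul_deriv_eq_deriv_mul_of_integrable (fun x _ => hφ' x) (fun x _ => hdwder x)
      (hint _ _ hφcont hddwc hddws) (hint _ _ hdφcont hdwc hdws) (hint _ _ hφcont hdwc hdws)
  have ibp2 : ∫ s : ℝ, (k * 2 * (s:ℂ) * φ s) * deriv w s
      = - ∫ s : ℝ, (k * 2 * φ s + k * 2 * (s:ℂ) * (k * 2 * (s:ℂ) * φ s)) * w s :=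
    integral_mul_deriv_eq_deriv_mul_of_integrable (fun x _ => hφ'' x) (fun x _ => hwder x)
      (hint _ _ hdφcont hdwc hdws) (hint _ _ hddφcont hwc hwsupp) (hint _ _ hdφcont hwc hwsupp)
  have hIBP : ∫ s : ℝ, φ s * deriv (deriv w) s
      = ∫ s : ℝ, (k * 2 * φ s + k * 2 * (s:ℂ) * (k * 2 * (s:ℂ) * φ s)) * w s := by
    rw [ibp1, ibp2, neg_neg]
  -- rewrite the right-hand side
  have hgt : g t = ∫ s : ℝ, φ s * w s := by
    rw [hg]
    simp only [hφs]
  have hRHS : (∫ s : ℝ, φ s * (((hbar : ℂ) ^ 2 / (2 * m)) * deriv (deriv w) s))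
      = (Complex.I * (hbar:ℂ) / (2*(t:ℂ))) * (∫ s : ℝ, φ s * w s)
        + (-(Complex.I) * (hbar:ℂ)) * ∫ s : ℝ, F' t s := by
    have e1 : (fun s : ℝ => φ s * (((hbar : ℂ) ^ 2 / (2 * m)) * deriv (deriv w) s))
        = fun s : ℝ => ((hbar : ℂ) ^ 2 / (2 * m)) * (φ s * deriv (deriv w) s) := by
      funext s; ring
    rw [e1, integral_const_mul, hIBP, ← integral_const_mul]
    have e3 : ∀ s : ℝ, ((hbar : ℂ) ^ 2 / (2 * m)) *
        ((k * 2 * φ s + k * 2 * (s:ℂ) * (k * 2 * (s:ℂ) * φ s)) * w s)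
        = (Complex.I * (hbar:ℂ) / (2*(t:ℂ))) * (φ s * w s)
          + (-(Complex.I) * (hbar:ℂ)) * F' t s := by
      intro s
      rw [hF']
      simp only [hφs]
      linear_combination kannai_pointwise hbar m t s hh' hm' ht' (φ s) (w s) k hk _ rfl
    rw [integral_congr_ae (Filter.Eventually.of_forall e3)]
    rw [integral_add ((hint _ _ hφcont hwc hwsupp).const_mul _) (hF'int.const_mul _),
      integral_const_mul, integral_const_mul]
  have hct : c t = A / (R:ℂ) := by
    simp only [hc, hR]
  simp only [hφs]
  rw [hRHS, hgt, hct]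
  exact kannai_scalar hbar t hh' ht' A (R:ℂ) (ρ:ℂ) _ _ hR0
    (by exact_mod_cast hρR) (by exact_mod_cast hRsq)

end
end

section
/- Let f : ℝ → ℂ be a Schwartz function. Then lim_{t → 0⁺} (e^{−iπ/4}√m /√(2πħt)) ∫_ℝ exp(i m s²/(2ħt)) f(s) ds = f(0). In particular, the function u defined by the Kannai formula from initial data w(x, ·) attains the correct initial value u(x,0) = w(x,0). -/
open Real Set MeasureTheory Filter

open Complex FourierTransform

noncomputable section



lemma mult_formula (u g : ℝ → ℂ) (hu : Integrable u) (hg : Integrable g) :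
    ∫ ξ : ℝ, 𝓕 u ξ * g ξ = ∫ x : ℝ, u x * 𝓕 g x := by
  have hflip : (innerₗ ℝ).flip = innerₗ ℝ := by
    apply LinearMap.ext; intro x; apply LinearMap.ext; intro y
    simp [real_inner_comm]
  have := VectorFourier.integral_fourierIntegral_smul_eq_flip
    (f := u) (g := g) (e := Real.fourierChar) (μ := (volume : Measure ℝ))
    (ν := (volume : Measure ℝ)) (L := innerₗ ℝ)
    continuous_fourierChar (by exact continuous_inner) hu hg
  rw [hflip] at this
  simpa [smul_eq_mul, Real.fourier_eq, VectorFourier.fourierIntegral] using this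

lemma cpow_neg_I_mul (r : ℝ) (hr : 0 < r) :
    ((-I * r : ℂ)) ^ (1/2 : ℂ) = (Real.sqrt r : ℂ) * Complex.exp (-(I * π / 4)) := by
  have hz : (-I * r : ℂ) ≠ 0 := by
    simp [hr.ne', I_ne_zero]
  rw [Complex.cpow_def_of_ne_zero hz]
  have harg : Complex.arg (-I * r) = -(π/2) := by
    rw [Complex.arg_mul_real hr (-I), Complex.arg_neg_I]
  have habs : ‖(-I * r : ℂ)‖ = r := by
    simp [abs_of_pos hr]
  rw [Complex.log, habs, harg]
  have h1 : (↑(Real.log r) + ↑(-(π/2)) * I) * (1/2 : ℂ) =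
      ↑(Real.log r / 2) + (-(↑π * I / 4)) := by push_cast; ring
  rw [h1, Complex.exp_add, ← Complex.ofReal_exp]
  have h2 : Real.exp (Real.log r / 2) = Real.sqrt r := by
    rw [Real.sqrt_eq_rpow, Real.rpow_def_of_pos hr]; ring_nf
  rw [h2]
  ring_nf

lemma gauss_fourier {b : ℂ} (hb : 0 < b.re) :
    (𝓕 fun x : ℝ => Complex.exp (-b * x ^ 2)) =
      fun ξ : ℝ => (1 / (b / π) ^ (1/2 : ℂ)) * Complex.exp (-π^2 * ξ^2 / b) := by
  have hb' : (0:ℝ) < (b/π).re := by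
    rw [Complex.div_ofReal_re]; positivity
  have hbne : b ≠ 0 := by intro h; simp [h] at hb
  have := fourier_gaussian_pi (b := b/π) hb'
  have heq : (fun x : ℝ => Complex.exp (-π * (b/π) * x ^ 2)) =
      fun x : ℝ => Complex.exp (-b * x ^ 2) := by
    ext x; congr 1
    field_simp [Complex.ofReal_ne_zero.mpr Real.pi_ne_zero]
  rw [heq] at this
  rw [this]
  ext ξ
  have : (-π^2 * (ξ:ℂ)^2 / b) = -↑π / (b / ↑π) * (ξ:ℂ) ^ 2 := by
    rw [div_div_eq_mul_div, div_mul_eq_mul_div]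
    ring_nf
  rw [this]

lemma step1 {b : ℂ} (hb : 0 < b.re) (h : SchwartzMap ℝ ℂ) :
    ∫ s : ℝ, Complex.exp (-b * s ^ 2) * (𝓕 ⇑h) s =
      (1 / (b / π) ^ (1/2 : ℂ)) * ∫ ξ : ℝ, Complex.exp (-π^2 * ξ^2 / b) * h ξ := by
  have hint : Integrable fun x : ℝ => Complex.exp (-b * (x:ℂ) ^ 2) :=
    integrable_cexp_neg_mul_sq hb
  rw [← mult_formula _ _ hint h.integrable, gauss_fourier hb]
  simp_rw [mul_assoc, integral_const_mul]

lemma step2 {a : ℝ} (ha : 0 < a) (h : SchwartzMap ℝ ℂ) :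
    ∫ s : ℝ, Complex.exp (Complex.I * a * s ^ 2) * (𝓕 ⇑h) s =
      (1 / ((-Complex.I * a) / π) ^ (1/2 : ℂ)) *
        ∫ ξ : ℝ, Complex.exp (-π^2 * ξ^2 / (-Complex.I * a)) * h ξ := by
  set g : SchwartzMap ℝ ℂ := SchwartzMap.fourierTransformCLM ℝ h with hg
  have hgfun : ⇑g = 𝓕 ⇑h := by simp [hg]; rfl
  set F : ℝ → ℂ := fun ε => ∫ s : ℝ, Complex.exp (-((ε : ℂ) - Complex.I * a) * s ^ 2) * g s with hF
  have hb0 : (-Complex.I * (a:ℂ)) ≠ 0 := by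
    simp [Complex.I_ne_zero, ha.ne']
  -- Limit 1 : F → LHS
  have lim1 : Tendsto F (nhdsWithin 0 (Set.Ioi 0))
      (nhds (∫ s : ℝ, Complex.exp (Complex.I * a * s ^ 2) * (𝓕 ⇑h) s)) := by
    rw [← hgfun]
    apply tendsto_integral_filter_of_dominated_convergence (fun s => ‖g s‖)
    · filter_upwards with ε
      exact (Continuous.mul (by fun_prop) g.continuous).aestronglyMeasurable
    · filter_upwards [self_mem_nhdsWithin] with ε (hε : 0 < ε)
      filter_upwards with s
      rw [norm_mul]
      have : ‖Complex.exp (-((ε : ℂ) - Complex.I * a) * (s:ℂ) ^ 2)‖ = Real.exp (-ε * s ^ 2) := by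
        rw [norm_cexp_neg_mul_sq]
        congr 2
        simp
      rw [this]
      have h1 : Real.exp (-ε * s^2) ≤ 1 := by
        apply Real.exp_le_one_iff.mpr
        nlinarith [sq_nonneg s]
      nlinarith [norm_nonneg (g s), Real.exp_pos (-ε * s^2)]
    · exact g.integrable.norm
    · filter_upwards with s
      have hc : Continuous fun ε : ℝ => Complex.exp (-((ε : ℂ) - Complex.I * a) * s ^ 2) * g s := by
        fun_prop
      have h2 : Tendsto (fun ε : ℝ => Complex.exp (-((ε:ℂ) - Complex.I*a)*s^2) * g s)
          (nhdsWithin 0 (Set.Ioi 0))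
          (nhds (Complex.exp (-(((0:ℝ):ℂ) - Complex.I*a)*s^2) * g s)) :=
        (hc.tendsto 0).mono_left nhdsWithin_le_nhds
      convert h2 using 3
      push_cast
      ring
  -- Limit 2 : F → RHS
  have lim2 : Tendsto F (nhdsWithin 0 (Set.Ioi 0))
      (nhds ((1 / ((-Complex.I * a) / π) ^ (1/2 : ℂ)) *
        ∫ ξ : ℝ, Complex.exp (-π^2 * ξ^2 / (-Complex.I * a)) * h ξ)) := by
    have heq : ∀ ε ∈ Set.Ioi (0:ℝ), F ε =
        (1 / (((ε : ℂ) - Complex.I * a) / π) ^ (1/2 : ℂ)) *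
          ∫ ξ : ℝ, Complex.exp (-π^2 * ξ^2 / ((ε : ℂ) - Complex.I * a)) * h ξ := by
      intro ε hε
      have hre : (0:ℝ) < ((ε : ℂ) - Complex.I * a).re := by
        simpa using hε
      show (∫ s : ℝ, Complex.exp (-((ε : ℂ) - Complex.I * a) * s ^ 2) * g s) = _
      rw [hgfun, step1 hre h]
    apply Tendsto.congr' (Filter.eventuallyEq_of_mem self_mem_nhdsWithin
      (fun ε hε => (heq ε hε).symm))
    apply Tendsto.mul
    · -- constant factor
      have hcont : ContinuousAt (fun z : ℂ => z ^ (1/2 : ℂ)) ((-Complex.I * a) / π) := by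
        apply continuousAt_cpow_const
        rw [Complex.mem_slitPlane_iff]
        right
        simp [Real.pi_ne_zero, ha.ne']
      have hbase : Tendsto (fun ε : ℝ => ((ε : ℂ) - Complex.I * a) / π)
          (nhdsWithin 0 (Set.Ioi 0)) (nhds ((-Complex.I * a) / π)) := by
        have hc0 : Continuous fun ε : ℝ => ((ε : ℂ) - Complex.I * a) / π := by fun_prop
        have h2 : Tendsto (fun ε : ℝ => ((ε : ℂ) - Complex.I * a) / π)
            (nhdsWithin 0 (Set.Ioi 0)) (nhds ((((0:ℝ):ℂ) - Complex.I * a) / π)) :=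
          (hc0.tendsto 0).mono_left nhdsWithin_le_nhds
        convert h2 using 3
        push_cast
        ring
      have hne : ((-Complex.I * a) / π) ^ (1/2 : ℂ) ≠ 0 := by
        rw [Ne, Complex.cpow_eq_zero_iff]
        simp [hb0, Real.pi_ne_zero, div_eq_zero_iff, ha.ne']
      exact (tendsto_const_nhds.div (hcont.tendsto.comp hbase) hne)
    · -- integral factor
      apply tendsto_integral_filter_of_dominated_convergence (fun ξ => ‖h ξ‖)
      · filter_upwards [self_mem_nhdsWithin] with ε (hε : 0 < ε)
        apply Continuous.aestronglyMeasurable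
        apply Continuous.mul ?_ h.continuous
        apply Continuous.cexp
        apply Continuous.div_const
        fun_prop
      · filter_upwards [self_mem_nhdsWithin] with ε (hε : 0 < ε)
        filter_upwards with ξ
        rw [norm_mul]
        have hre : (-(π:ℂ)^2 * ξ^2 / ((ε : ℂ) - Complex.I * a)).re ≤ 0 := by
          rw [div_eq_mul_inv]
          have : (-(π:ℂ)^2 * (ξ:ℂ)^2) = ((-(π^2) * ξ^2 : ℝ) : ℂ) := by push_cast; ring
          rw [this, Complex.re_ofReal_mul, Complex.inv_re]
          have h1 : ((ε : ℂ) - Complex.I * a).re = ε := by simp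
          rw [h1]
          have h2 : (0:ℝ) ≤ ε / Complex.normSq ((ε : ℂ) - Complex.I * a) := by
            apply div_nonneg hε.le (Complex.normSq_nonneg _)
          nlinarith [sq_nonneg (π * ξ)]
        have : ‖Complex.exp (-(π:ℂ)^2 * ξ^2 / ((ε : ℂ) - Complex.I * a))‖ ≤ 1 := by
          rw [Complex.norm_exp]
          exact Real.exp_le_one_iff.mpr hre
        nlinarith [norm_nonneg (h ξ)]
      · exact h.integrable.norm
      · filter_upwards with ξ
        have hc : ContinuousAt (fun ε : ℝ =>
            Complex.exp (-(π:ℂ)^2 * ξ^2 / ((ε : ℂ) - Complex.I * a)) * h ξ) 0 := by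
          apply ContinuousAt.mul ?_ continuousAt_const
          apply ContinuousAt.cexp
          apply ContinuousAt.div continuousAt_const (by fun_prop)
          simpa using hb0
        have h2 : Tendsto (fun ε : ℝ =>
              Complex.exp (-(π:ℂ)^2 * ξ^2 / ((ε : ℂ) - Complex.I * a)) * h ξ)
            (nhdsWithin 0 (Set.Ioi 0))
            (nhds (Complex.exp (-(π:ℂ)^2 * ξ^2 / ((((0:ℝ)):ℂ) - Complex.I * a)) * h ξ)) :=
          hc.tendsto.mono_left nhdsWithin_le_nhds
        convert h2 using 4
        push_cast
        ring
  exact tendsto_nhds_unique lim1 lim2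

/-- Approximate-identity property of the Fresnel kernel in the Kannai formula:
for a Schwartz function `f`,
`lim_{t→0⁺} (e^{-iπ/4}√m/√(2πħt)) ∫_ℝ exp(i m s²/(2ħt)) f(s) ds = f(0)`. -/
theorem kannai_initial_value
    (hbar m : ℝ) (hhbar : 0 < hbar) (hm : 0 < m)
    (f : SchwartzMap ℝ ℂ) :
    Tendsto
      (fun t : ℝ =>
        (Complex.exp (-(Complex.I * Real.pi / 4)) * (Real.sqrt m : ℂ) /
          (Real.sqrt (2 * Real.pi * hbar * t) : ℂ)) *
        ∫ s : ℝ, Complex.exp (Complex.I * m * s ^ 2 / (2 * hbar * t)) * f s)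
      (nhdsWithin 0 (Set.Ioi 0)) (nhds (f 0)) := by
  set h : SchwartzMap ℝ ℂ := (FourierTransform.fourierCLE ℂ (SchwartzMap ℝ ℂ)).symm f with hh
  have hf : 𝓕 ⇑h = ⇑f := by
    have : (FourierTransform.fourierCLE ℂ (SchwartzMap ℝ ℂ)) h = f := by
      rw [hh]; exact (FourierTransform.fourierCLE ℂ (SchwartzMap ℝ ℂ)).apply_symm_apply f
    rw [← this, FourierTransform.fourierCLE_apply, SchwartzMap.fourier_coe]
  set K : ℝ → ℂ := fun t => ∫ ξ : ℝ, Complex.exp (-Complex.I * (π^2 * (2*hbar*t/m) : ℝ) * ξ^2) * h ξ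
    with hK
  have hEK : ∀ t ∈ Set.Ioi (0:ℝ),
      (Complex.exp (-(Complex.I * Real.pi / 4)) * (Real.sqrt m : ℂ) /
          (Real.sqrt (2 * Real.pi * hbar * t) : ℂ)) *
        (∫ s : ℝ, Complex.exp (Complex.I * m * s ^ 2 / (2 * hbar * t)) * f s) = K t := by
    intro t ht
    rw [Set.mem_Ioi] at ht
    set a : ℝ := m / (2 * hbar * t) with ha'
    have ha : 0 < a := by positivity
    have ha0 : (a:ℂ) ≠ 0 := Complex.ofReal_ne_zero.mpr ha.ne'
    -- rewrite the integrand
    have hexp : ∀ s : ℝ, Complex.I * m * s ^ 2 / (2 * hbar * t)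
        = Complex.I * (a:ℂ) * s ^ 2 := by
      intro s
      rw [ha']
      push_cast
      field_simp
    simp_rw [hexp, ← hf]
    rw [step2 ha h]
    -- the constant is 1
    have hconst : (Complex.exp (-(Complex.I * Real.pi / 4)) * (Real.sqrt m : ℂ) /
          (Real.sqrt (2 * Real.pi * hbar * t) : ℂ)) *
        (1 / ((-Complex.I * a) / π) ^ (1/2 : ℂ)) = 1 := by
      have h1 : ((-Complex.I * (a:ℂ)) / (π:ℂ)) = -Complex.I * ((a/π : ℝ) : ℂ) := by
        push_cast; ring
      have hap : 0 < a / π := div_pos ha Real.pi_pos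
      rw [h1, cpow_neg_I_mul _ hap]
      have h2 : Real.sqrt (a / π) = Real.sqrt m / Real.sqrt (2 * π * hbar * t) := by
        have : a / π = m / (2 * π * hbar * t) := by
          rw [ha', div_div]; ring_nf
        rw [this, Real.sqrt_div hm.le]
      rw [h2]
      have hs1 : (Real.sqrt (2 * π * hbar * t) : ℂ) ≠ 0 := by
        simp only [ne_eq, Complex.ofReal_eq_zero]
        positivity
      have hs2 : (Real.sqrt m : ℂ) ≠ 0 := by
        simp only [ne_eq, Complex.ofReal_eq_zero]
        positivity
      have hs3 : Complex.exp (-(Complex.I * π / 4)) ≠ 0 := Complex.exp_ne_zero _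
      push_cast
      rw [mul_one_div, div_eq_one_iff_eq (by
        apply mul_ne_zero (div_ne_zero hs2 hs1) hs3)]
      ring
    rw [← mul_assoc, hconst, one_mul, hK]
    -- exponents agree
    congr 1
    ext ξ
    congr 2
    have hb0 : (-Complex.I * (a:ℂ)) ≠ 0 := by
      simp [Complex.I_ne_zero, ha.ne']
    rw [div_eq_iff hb0]
    have hmc : (m:ℂ) ≠ 0 := Complex.ofReal_ne_zero.mpr hm.ne'
    have htc : (t:ℂ) ≠ 0 := Complex.ofReal_ne_zero.mpr ht.ne'
    have hhc : (hbar:ℂ) ≠ 0 := Complex.ofReal_ne_zero.mpr hhbar.ne'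
    rw [ha']
    push_cast
    field_simp
    ring_nf
    simp [Complex.I_sq]
  -- limit of K
  have hK0 : Tendsto K (nhdsWithin 0 (Set.Ioi 0)) (nhds (f 0)) := by
    have hf0 : f 0 = ∫ ξ : ℝ, h ξ := by
      rw [← hf, Real.fourier_eq]
      simp
    rw [hf0, hK]
    apply tendsto_integral_filter_of_dominated_convergence (fun ξ => ‖h ξ‖)
    · filter_upwards with t
      exact (Continuous.mul (by fun_prop) h.continuous).aestronglyMeasurable
    · filter_upwards with t
      filter_upwards with ξ
      rw [norm_mul]
      have : ‖Complex.exp (-Complex.I * ((π^2 * (2*hbar*t/m) : ℝ) : ℂ) * (ξ:ℂ)^2)‖ = 1 := by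
        rw [Complex.norm_exp]
        have : (-Complex.I * ((π^2 * (2*hbar*t/m) : ℝ) : ℂ) * (ξ:ℂ)^2).re = 0 := by
          have heq2 : (-Complex.I * ((π^2 * (2*hbar*t/m) : ℝ) : ℂ) * (ξ:ℂ)^2)
              = ((-(π^2 * (2*hbar*t/m)) * ξ^2 : ℝ) : ℂ) * Complex.I := by
            push_cast; ring
          rw [heq2]
          simp [← Complex.ofReal_pow]
        rw [this, Real.exp_zero]
      rw [this, one_mul]
    · exact h.integrable.norm
    · filter_upwards with ξ
      have hc : Continuous fun t : ℝ =>
          Complex.exp (-Complex.I * ((π^2 * (2*hbar*t/m) : ℝ) : ℂ) * (ξ:ℂ)^2) * h ξ := by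
        fun_prop
      have h2 : Tendsto (fun t : ℝ =>
            Complex.exp (-Complex.I * ((π^2 * (2*hbar*t/m) : ℝ) : ℂ) * (ξ:ℂ)^2) * h ξ)
          (nhdsWithin 0 (Set.Ioi 0))
          (nhds (Complex.exp (-Complex.I * ((π^2 * (2*hbar*(0:ℝ)/m) : ℝ) : ℂ) * (ξ:ℂ)^2) * h ξ)) :=
        (hc.tendsto 0).mono_left nhdsWithin_le_nhds
      convert h2 using 2
      norm_num
  exact Filter.Tendsto.congr'
    (Filter.eventuallyEq_of_mem self_mem_nhdsWithin fun t ht => (hEK t ht).symm) hK0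

end
end

section
/- Let a ∈ ℝ, a ≠ 0, let M ∈ ℕ, and let w : ℝ → ℂ be smooth such that for every r ≥ 0 there is a constant C_r with |w^{(r)}(s)| ≤ C_r(1 + |s|)^M for all s ∈ ℝ. Let χ₀ : ℝ → ℝ be smooth with compact support, χ₀(s) = 1 for |s| ≤ 1/2 and χ₀(s) = 0 for |s| ≥ 1. Then the regularized oscillatory integrals ∫_ℝ χ₀(εs) e^{ias²} w(s) ds converge to a limit in ℂ as ε → 0⁺. -/
open Real Set MeasureTheory Filter
open scoped ContDiff Nat

noncomputable section

namespace OscReg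

/-- The complex-valued inverse function on `ℝ`. -/
def invC : ℝ → ℂ := fun t => (t : ℂ)⁻¹

/-- `f` divided by the identity. -/
def qf (f : ℝ → ℂ) : ℝ → ℂ := fun t => f t * invC t

/-- The integration-by-parts operator for the phase `exp (I a s²)`. -/
def T (a : ℝ) (f : ℝ → ℂ) : ℝ → ℂ :=
  fun s => -(2 * Complex.I * a)⁻¹ * deriv (qf f) s

lemma contDiffOn_invC : ContDiffOn ℝ ∞ invC {(0:ℝ)}ᶜ := by
  have h : invC = (fun x : ℝ => ((x⁻¹ : ℝ) : ℂ)) := by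
    funext t; simp [invC]
  rw [h]
  exact Complex.ofRealCLM.contDiff.comp_contDiffOn (contDiffOn_inv ℝ)

lemma iteratedDeriv_invC (n : ℕ) :
    ∀ s : ℝ, s ≠ 0 →
      iteratedDeriv n invC s = (-1) ^ n * (n ! : ℂ) * (s : ℂ) ^ (-(n : ℤ) - 1) := by
  induction n with
  | zero =>
    intro s hs
    simp [invC, zpow_neg]
  | succ n ih =>
    intro s hs
    have hev : iteratedDeriv n invC =ᶠ[nhds s]
        fun t : ℝ => (-1) ^ n * (n ! : ℂ) * (t : ℂ) ^ (-(n : ℤ) - 1) := by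
      filter_upwards [isOpen_ne.mem_nhds hs] with t ht
      exact ih t ht
    rw [iteratedDeriv_succ, hev.deriv_eq]
    have hd : HasDerivAt (fun t : ℝ => (t : ℂ) ^ (-(n : ℤ) - 1))
        (((-(n : ℤ) - 1 : ℤ) : ℂ) * (s : ℂ) ^ (-(n : ℤ) - 1 - 1)) s :=
      (hasDerivAt_zpow _ _ (Or.inl (Complex.ofReal_ne_zero.mpr hs))).comp_ofReal
    rw [(hd.const_mul ((-1) ^ n * (n ! : ℂ))).deriv]
    have hexp : (-(n : ℤ) - 1 - 1) = (-((n+1 : ℕ) : ℤ) - 1) := by push_cast; ring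
    rw [hexp]
    rw [show ((n+1 : ℕ) ! : ℂ) = (n+1) * (n ! : ℂ) by push_cast [Nat.factorial_succ]; ring]
    push_cast
    ring

lemma norm_iteratedDeriv_invC (n : ℕ) (s : ℝ) (hs : s ≠ 0) :
    ‖iteratedDeriv n invC s‖ = (n ! : ℝ) * |s|⁻¹ ^ (n + 1) := by
  rw [iteratedDeriv_invC n s hs]
  rw [norm_mul, norm_mul, norm_pow, norm_neg, norm_one, one_pow, one_mul]
  rw [show (-(n : ℤ) - 1) = -((n + 1 : ℕ) : ℤ) by push_cast; ring]
  rw [zpow_neg, norm_inv, zpow_natCast, norm_pow, Complex.norm_real, ← inv_pow]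
  norm_num [Real.norm_eq_abs]

lemma qf_contDiff {f : ℝ → ℂ} (hf : ContDiff ℝ ∞ f)
    (hf0 : ∀ s : ℝ, |s| < 1 / 2 → f s = 0) : ContDiff ℝ ∞ (qf f) := by
  rw [contDiff_iff_contDiffAt]
  intro x
  rcases lt_or_ge |x| (1 / 2) with hx | hx
  · have hU : IsOpen {t : ℝ | |t| < 1 / 2} := isOpen_lt continuous_abs continuous_const
    have hev : qf f =ᶠ[nhds x] fun _ => 0 := by
      filter_upwards [hU.mem_nhds hx] with t ht
      simp [qf, hf0 t ht]
    exact contDiffAt_const.congr_of_eventuallyEq hev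
  · have hx0 : x ≠ 0 := by
      intro h; rw [h] at hx; norm_num at hx
    exact hf.contDiffAt.mul
      (contDiffOn_invC.contDiffAt (isOpen_compl_singleton.mem_nhds hx0))

lemma deriv_qf_zero {f : ℝ → ℂ} (hf0 : ∀ s : ℝ, |s| < 1 / 2 → f s = 0) :
    ∀ s : ℝ, |s| < 1 / 2 → deriv (qf f) s = 0 := by
  intro s hs
  have hU : IsOpen {t : ℝ | |t| < 1 / 2} := isOpen_lt continuous_abs continuous_const
  have hev : qf f =ᶠ[nhds s] fun _ => (0:ℂ) := by
    filter_upwards [hU.mem_nhds hs] with t ht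
    simp [qf, hf0 t ht]
  rw [hev.deriv_eq, deriv_const]

lemma T_contDiff {a : ℝ} {f : ℝ → ℂ} (hf : ContDiff ℝ ∞ f)
    (hf0 : ∀ s : ℝ, |s| < 1 / 2 → f s = 0) : ContDiff ℝ ∞ (T a f) :=
  contDiff_const.mul (contDiff_infty_iff_deriv.mp (qf_contDiff hf hf0)).2

lemma T_zero {a : ℝ} {f : ℝ → ℂ} (hf0 : ∀ s : ℝ, |s| < 1 / 2 → f s = 0) :
    ∀ s : ℝ, |s| < 1 / 2 → T a f s = 0 := by
  intro s hs
  simp [T, deriv_qf_zero hf0 s hs]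

lemma T_compactSupport {a : ℝ} {f : ℝ → ℂ} (hsupp : HasCompactSupport f) :
    HasCompactSupport (T a f) := by
  have h1 : HasCompactSupport (qf f) := hsupp.mul_right
  exact h1.deriv.mul_left

lemma coe_le_infty (i : ℕ) : (i : WithTop ℕ∞) ≤ ∞ := by
  exact_mod_cast (le_top : (i : ℕ∞) ≤ ⊤)

lemma coe_lt_infty (i : ℕ) : (i : WithTop ℕ∞) < ∞ := by
  exact_mod_cast (WithTop.coe_lt_top i : (i : ℕ∞) < ⊤)

lemma iteratedDeriv_ofReal (h : ℝ → ℝ) (hh : ContDiff ℝ ∞ h) (i : ℕ) :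
    iteratedDeriv i (fun s => ((h s : ℝ) : ℂ)) = fun s => ((iteratedDeriv i h s : ℝ) : ℂ) := by
  induction i with
  | zero => simp
  | succ i ih =>
    funext x
    rw [iteratedDeriv_succ, ih, iteratedDeriv_succ]
    exact HasDerivAt.deriv
      (((hh.differentiable_iteratedDeriv i (coe_lt_infty i)) x).hasDerivAt.ofReal_comp)

lemma norm_iteratedDeriv_ofReal (h : ℝ → ℝ) (hh : ContDiff ℝ ∞ h) (i : ℕ) (x : ℝ) :
    ‖iteratedDeriv i (fun s => ((h s : ℝ) : ℂ)) x‖ = ‖iteratedDeriv i h x‖ := by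
  rw [iteratedDeriv_ofReal h hh i]
  exact Complex.norm_real _

lemma iteratedDeriv_cmul {g : ℝ → ℂ} (hg : ContDiff ℝ ∞ g) (c : ℂ) (r : ℕ) :
    iteratedDeriv r (fun x => c * g x) = fun x => c * iteratedDeriv r g x := by
  induction r with
  | zero => simp
  | succ r ih =>
    funext x
    rw [iteratedDeriv_succ, ih, iteratedDeriv_succ]
    refine deriv_const_mul c ?_
    have hrlt : (r : WithTop ℕ∞) < ∞ := by
      exact_mod_cast (WithTop.coe_lt_top r : (r : ℕ∞) < ⊤)
    exact (hg.differentiable_iteratedDeriv r hrlt).differentiableAt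

/-- The constant produced by one integration by parts. -/
def nextC (a : ℝ) (C : ℕ → ℝ) : ℕ → ℝ := fun r =>
  (2 * |a|)⁻¹ * ∑ i ∈ Finset.range (r + 2),
    ((r + 1).choose i : ℝ) * max (C i) 0 * (((r + 1 - i)! : ℝ) * 2 ^ (r + 1 - i))

lemma norm_Tconst (a : ℝ) : ‖(-(2 * Complex.I * (a:ℂ))⁻¹ : ℂ)‖ = (2 * |a|)⁻¹ := by
  simp [norm_inv, Complex.norm_real]

lemma T_bound (a : ℝ) (M n : ℕ) {f : ℝ → ℂ} (hf : ContDiff ℝ ∞ f)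
    (hf0 : ∀ s : ℝ, |s| < 1 / 2 → f s = 0) {C : ℕ → ℝ}
    (hC : ∀ r : ℕ, ∀ s : ℝ, 1 / 2 ≤ |s| →
      ‖iteratedDeriv r f s‖ ≤ C r * (1 + |s|) ^ M / |s| ^ n) :
    ∀ r : ℕ, ∀ s : ℝ, 1 / 2 ≤ |s| →
      ‖iteratedDeriv r (T a f) s‖ ≤ nextC a C r * (1 + |s|) ^ M / |s| ^ (n + 1) := by
  intro r s hs
  have hs0 : s ≠ 0 := by
    intro h; rw [h] at hs; norm_num at hs
  have hspos : 0 < |s| := abs_pos.mpr hs0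
  have hsinv : |s|⁻¹ ≤ 2 := by
    rw [show (2:ℝ) = (1/2)⁻¹ by norm_num]
    exact inv_anti₀ (by norm_num) hs
  have hPpos : (0:ℝ) ≤ (1 + |s|) ^ M := by positivity
  -- step 1 : peel off the constant
  have hq : ContDiff ℝ ∞ (qf f) := qf_contDiff hf hf0
  have hstep1 : iteratedDeriv r (T a f) s
      = -(2 * Complex.I * a)⁻¹ * iteratedDeriv (r + 1) (qf f) s := by
    have hder : ContDiff ℝ ∞ (deriv (qf f)) := (contDiff_infty_iff_deriv.mp hq).2
    have : iteratedDeriv r (T a f) = fun x =>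
        -(2 * Complex.I * a)⁻¹ * iteratedDeriv r (deriv (qf f)) x :=
      iteratedDeriv_cmul hder _ r
    rw [this, iteratedDeriv_succ']
  rw [hstep1, norm_mul, norm_Tconst]
  -- step 2 : Leibniz on the open set `{0}ᶜ`
  have hU : IsOpen ({(0:ℝ)}ᶜ) := isOpen_compl_singleton
  have hsU : s ∈ ({(0:ℝ)}ᶜ) := Set.mem_compl_singleton_iff.mpr hs0
  have hwithin : ‖iteratedDeriv (r + 1) (qf f) s‖
      = ‖iteratedFDerivWithin ℝ (r + 1) (qf f) ({(0:ℝ)}ᶜ) s‖ := by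
    rw [← norm_iteratedFDeriv_eq_norm_iteratedDeriv,
      iteratedFDerivWithin_of_isOpen (r + 1) hU hsU]
  have hleib := norm_iteratedFDerivWithin_mul_le (𝕜 := ℝ) (f := f) (g := invC)
    (hf.contDiffOn) contDiffOn_invC hU.uniqueDiffOn hsU
    (n := r + 1) (by exact_mod_cast (le_top : ((r+1 : ℕ) : ℕ∞) ≤ ⊤))
  have hterm : ∀ i ∈ Finset.range (r + 2),
      ((r + 1).choose i : ℝ) * ‖iteratedFDerivWithin ℝ i f ({(0:ℝ)}ᶜ) s‖ *
        ‖iteratedFDerivWithin ℝ (r + 1 - i) invC ({(0:ℝ)}ᶜ) s‖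
      ≤ (((r + 1).choose i : ℝ) * max (C i) 0 * (((r + 1 - i)! : ℝ) * 2 ^ (r + 1 - i))) *
          ((1 + |s|) ^ M / |s| ^ (n + 1)) := by
    intro i _
    have hfi : ‖iteratedFDerivWithin ℝ i f ({(0:ℝ)}ᶜ) s‖ = ‖iteratedDeriv i f s‖ := by
      rw [iteratedFDerivWithin_of_isOpen i hU hsU, norm_iteratedFDeriv_eq_norm_iteratedDeriv]
    have h1 : ‖iteratedFDerivWithin ℝ i f ({(0:ℝ)}ᶜ) s‖
        ≤ max (C i) 0 * ((1 + |s|) ^ M / |s| ^ n) := by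
      rw [hfi]
      refine le_trans (hC i s hs) ?_
      rw [mul_div_assoc]
      exact mul_le_mul_of_nonneg_right (le_max_left _ _) (by positivity)
    have h2 : ‖iteratedFDerivWithin ℝ (r + 1 - i) invC ({(0:ℝ)}ᶜ) s‖
        ≤ (((r + 1 - i)! : ℝ) * 2 ^ (r + 1 - i)) * |s|⁻¹ := by
      rw [iteratedFDerivWithin_of_isOpen _ hU hsU, norm_iteratedFDeriv_eq_norm_iteratedDeriv,
        norm_iteratedDeriv_invC _ s hs0]
      have hp : |s|⁻¹ ^ (r + 1 - i + 1) ≤ 2 ^ (r + 1 - i) * |s|⁻¹ := by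
        rw [pow_succ]
        exact mul_le_mul_of_nonneg_right
          (pow_le_pow_left₀ (inv_nonneg.mpr hspos.le) hsinv _) (inv_nonneg.mpr hspos.le)
      calc ((r + 1 - i)! : ℝ) * |s|⁻¹ ^ (r + 1 - i + 1)
          ≤ ((r + 1 - i)! : ℝ) * (2 ^ (r + 1 - i) * |s|⁻¹) :=
            mul_le_mul_of_nonneg_left hp (by positivity)
        _ = (((r + 1 - i)! : ℝ) * 2 ^ (r + 1 - i)) * |s|⁻¹ := by ring
    have h3 : ((r + 1).choose i : ℝ) * ‖iteratedFDerivWithin ℝ i f ({(0:ℝ)}ᶜ) s‖ *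
          ‖iteratedFDerivWithin ℝ (r + 1 - i) invC ({(0:ℝ)}ᶜ) s‖
        ≤ ((r + 1).choose i : ℝ) * (max (C i) 0 * ((1 + |s|) ^ M / |s| ^ n)) *
          ((((r + 1 - i)! : ℝ) * 2 ^ (r + 1 - i)) * |s|⁻¹) := by
      have hcn : (0:ℝ) ≤ ((r + 1).choose i : ℝ) := by positivity
      refine mul_le_mul ?_ h2 (norm_nonneg _) (by positivity)
      exact mul_le_mul_of_nonneg_left h1 hcn
    refine le_trans h3 (le_of_eq ?_)
    have hpow : (1 + |s|) ^ M / |s| ^ n * |s|⁻¹ = (1 + |s|) ^ M / |s| ^ (n + 1) := by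
      rw [div_eq_mul_inv, div_eq_mul_inv, mul_assoc, ← mul_inv, ← pow_succ]
    rw [← hpow]
    ring
  have hqf : qf f = fun y => f y * invC y := rfl
  have hsum : ‖iteratedDeriv (r + 1) (qf f) s‖
      ≤ (∑ i ∈ Finset.range (r + 2),
          ((r + 1).choose i : ℝ) * max (C i) 0 * (((r + 1 - i)! : ℝ) * 2 ^ (r + 1 - i))) *
        ((1 + |s|) ^ M / |s| ^ (n + 1)) := by
    rw [hwithin, hqf]
    refine le_trans hleib (le_trans (Finset.sum_le_sum hterm) (le_of_eq ?_))
    rw [Finset.sum_mul]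
  calc (2 * |a|)⁻¹ * ‖iteratedDeriv (r + 1) (qf f) s‖
      ≤ (2 * |a|)⁻¹ * ((∑ i ∈ Finset.range (r + 2),
          ((r + 1).choose i : ℝ) * max (C i) 0 * (((r + 1 - i)! : ℝ) * 2 ^ (r + 1 - i))) *
        ((1 + |s|) ^ M / |s| ^ (n + 1))) :=
        mul_le_mul_of_nonneg_left hsum (by positivity)
    _ = nextC a C r * (1 + |s|) ^ M / |s| ^ (n + 1) := by
        rw [nextC]; ring

lemma Titer_sz (a : ℝ) (n : ℕ) {f : ℝ → ℂ} (hf : ContDiff ℝ ∞ f)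
    (hf0 : ∀ s : ℝ, |s| < 1 / 2 → f s = 0) :
    ContDiff ℝ ∞ ((T a)^[n] f) ∧ ∀ s : ℝ, |s| < 1 / 2 → (T a)^[n] f s = 0 := by
  induction n with
  | zero => exact ⟨hf, hf0⟩
  | succ n ih =>
    rw [Function.iterate_succ_apply']
    exact ⟨T_contDiff ih.1 ih.2, T_zero ih.2⟩

lemma Titer_supp (a : ℝ) (n : ℕ) {f : ℝ → ℂ} (h : HasCompactSupport f) :
    HasCompactSupport ((T a)^[n] f) := by
  induction n with
  | zero => exact h
  | succ n ih =>
    rw [Function.iterate_succ_apply']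
    exact T_compactSupport ih

lemma Titer_bound (a : ℝ) (M : ℕ) (n : ℕ) {f : ℝ → ℂ} {C : ℕ → ℝ}
    (hf : ContDiff ℝ ∞ f) (hf0 : ∀ s : ℝ, |s| < 1 / 2 → f s = 0)
    (hC : ∀ r : ℕ, ∀ s : ℝ, 1 / 2 ≤ |s| →
      ‖iteratedDeriv r f s‖ ≤ C r * (1 + |s|) ^ M) :
    ∀ r : ℕ, ∀ s : ℝ, 1 / 2 ≤ |s| →
      ‖iteratedDeriv r ((T a)^[n] f) s‖
        ≤ ((nextC a)^[n] C) r * (1 + |s|) ^ M / |s| ^ n := by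
  induction n with
  | zero =>
    intro r s hs
    simpa using hC r s hs
  | succ n ih =>
    rw [show (T a)^[n+1] f = T a ((T a)^[n] f) from Function.iterate_succ_apply' _ _ _,
      show (nextC a)^[n+1] C = nextC a ((nextC a)^[n] C) from Function.iterate_succ_apply' _ _ _]
    exact T_bound a M n (Titer_sz a n hf hf0).1 (Titer_sz a n hf hf0).2 ih

lemma T_local (a : ℝ) {f₁ f₂ : ℝ → ℂ} {U : Set ℝ} (hU : IsOpen U)
    (h : ∀ t ∈ U, f₁ t = f₂ t) : ∀ t ∈ U, T a f₁ t = T a f₂ t := by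
  intro t ht
  have hev : qf f₁ =ᶠ[nhds t] qf f₂ := by
    filter_upwards [hU.mem_nhds ht] with x hx
    simp [qf, h x hx]
  simp [T, hev.deriv_eq]

lemma Titer_local (a : ℝ) (n : ℕ) {f₁ f₂ : ℝ → ℂ} {U : Set ℝ} (hU : IsOpen U)
    (h : ∀ t ∈ U, f₁ t = f₂ t) : ∀ t ∈ U, (T a)^[n] f₁ t = (T a)^[n] f₂ t := by
  induction n with
  | zero => exact h
  | succ n ih =>
    rw [show (T a)^[n+1] f₁ = T a ((T a)^[n] f₁) from Function.iterate_succ_apply' _ _ _,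
      show (T a)^[n+1] f₂ = T a ((T a)^[n] f₂) from Function.iterate_succ_apply' _ _ _]
    exact T_local a hU ih

/-- The oscillatory phase. -/
def gph (a : ℝ) : ℝ → ℂ := fun s => Complex.exp (Complex.I * a * s ^ 2)

lemma gph_cont (a : ℝ) : Continuous (gph a) := by
  unfold gph; fun_prop

lemma norm_gph (a : ℝ) (s : ℝ) : ‖gph a s‖ = 1 := by
  rw [gph, Complex.norm_exp]
  have h : (Complex.I * a * (s:ℂ) ^ 2).re = 0 := by
    simp [← Complex.ofReal_pow]
  rw [h, Real.exp_zero]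

lemma gph_hasDeriv (a : ℝ) (s : ℝ) :
    HasDerivAt (gph a) (2 * Complex.I * a * s * gph a s) s := by
  have h0 : HasDerivAt (fun z : ℂ => Complex.I * a * z ^ 2)
      (Complex.I * a * (2 * s)) (s : ℂ) := by
    simpa [mul_comm] using ((hasDerivAt_pow 2 (s:ℂ)).const_mul (Complex.I * (a:ℂ)))
  have h1 : HasDerivAt (fun t : ℝ => Complex.I * a * (t:ℂ) ^ 2)
      (Complex.I * a * (2 * s)) s := h0.comp_ofReal
  have := h1.cexp
  convert this using 1
  · rfl
  rw [gph]; ring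

lemma ibp (a : ℝ) (ha : a ≠ 0) {f : ℝ → ℂ} (hf : ContDiff ℝ ∞ f)
    (hf0 : ∀ s : ℝ, |s| < 1 / 2 → f s = 0) (hsupp : HasCompactSupport f) :
    ∫ s : ℝ, f s * gph a s = ∫ s : ℝ, T a f s * gph a s := by
  have hq := qf_contDiff hf hf0
  have hqc : HasCompactSupport (qf f) := hsupp.mul_right
  have hone : (1 : WithTop ℕ∞) ≤ ∞ := by exact_mod_cast (le_top : (1:ℕ∞) ≤ ⊤)
  have hu : ∀ x : ℝ, HasDerivAt (qf f) (deriv (qf f) x) x := fun x =>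
    ((hq.differentiable (by simp)) x).hasDerivAt
  have hv := gph_hasDeriv a
  have hqcont : Continuous (qf f) := hq.continuous
  have hdqcont : Continuous (deriv (qf f)) := hq.continuous_deriv hone
  have hgc := gph_cont a
  have h1 : Integrable (fun x : ℝ => qf f x * (2 * Complex.I * a * x * gph a x)) := by
    apply Continuous.integrable_of_hasCompactSupport
    · exact hqcont.mul ((by fun_prop : Continuous fun x : ℝ =>
        2 * Complex.I * (a:ℂ) * (x:ℂ)).mul hgc)
    · exact hqc.mul_right
  have h2 : Integrable (fun x : ℝ => deriv (qf f) x * gph a x) := by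
    apply Continuous.integrable_of_hasCompactSupport
    · exact hdqcont.mul hgc
    · exact hqc.deriv.mul_right
  have h3 : Integrable (fun x : ℝ => qf f x * gph a x) := by
    apply Continuous.integrable_of_hasCompactSupport
    · exact hqcont.mul hgc
    · exact hqc.mul_right
  have H := integral_mul_deriv_eq_deriv_mul_of_integrable (fun x _ => hu x) (fun x _ => hv x) h1 h2 h3
  have hC2 : (2 * Complex.I * (a:ℂ)) ≠ 0 :=
    mul_ne_zero (mul_ne_zero two_ne_zero Complex.I_ne_zero) (Complex.ofReal_ne_zero.mpr ha)
  have hpt : (fun x : ℝ => qf f x * (2 * Complex.I * a * x * gph a x))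
      = fun x : ℝ => (2 * Complex.I * a) * (f x * gph a x) := by
    funext x
    by_cases hx : x = 0
    · subst hx
      simp [qf, hf0 0 (by norm_num)]
    · have hxC : (x:ℂ) ≠ 0 := Complex.ofReal_ne_zero.mpr hx
      rw [qf]
      show f x * invC x * _ = _
      rw [invC]
      field_simp
  rw [hpt, integral_const_mul] at H
  have H2 : ∫ x : ℝ, deriv (qf f) x * gph a x
      = -(2 * Complex.I * a * ∫ x : ℝ, f x * gph a x) := by
    rw [H, neg_neg]
  have hTpt : (fun x : ℝ => T a f x * gph a x)
      = fun x : ℝ => -(2 * Complex.I * a)⁻¹ * (deriv (qf f) x * gph a x) := by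
    funext x
    rw [T]
    ring
  conv_rhs => rw [hTpt]
  rw [integral_const_mul, H2]
  field_simp
  rw [mul_div_assoc, div_self (Complex.ofReal_ne_zero.mpr ha), mul_one]

lemma ibp_iter (a : ℝ) (ha : a ≠ 0) (n : ℕ) {f : ℝ → ℂ} (hf : ContDiff ℝ ∞ f)
    (hf0 : ∀ s : ℝ, |s| < 1 / 2 → f s = 0) (hsupp : HasCompactSupport f) :
    ∫ s : ℝ, f s * gph a s = ∫ s : ℝ, (T a)^[n] f s * gph a s := by
  induction n with
  | zero => rfl
  | succ n ih =>
    rw [show (T a)^[n+1] f = T a ((T a)^[n] f) from Function.iterate_succ_apply' _ _ _]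
    rw [ih]
    exact ibp a ha (Titer_sz a n hf hf0).1 (Titer_sz a n hf hf0).2 (Titer_supp a n hsupp)


end OscReg

end
set_option maxHeartbeats 2000000 in
/-- Existence of the regularized oscillatory integral `∫_ℝ e^{ias²} w(s) ds` for a
smooth amplitude `w` with polynomially bounded derivatives: the cutoff integrals
`∫_ℝ χ₀(εs) e^{ias²} w(s) ds` converge as `ε → 0⁺`. -/
theorem oscillatory_integral_regularization_converges
    (a : ℝ) (ha : a ≠ 0) (M : ℕ)
    (w : ℝ → ℂ) (hw : ContDiff ℝ (⊤ : ℕ∞) w)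
    (hwbound : ∀ r : ℕ, ∃ C : ℝ, ∀ s : ℝ, ‖iteratedDeriv r w s‖ ≤ C * (1 + |s|) ^ M)
    (χ₀ : ℝ → ℝ) (hχsmooth : ContDiff ℝ (⊤ : ℕ∞) χ₀) (hχsupp : HasCompactSupport χ₀)
    (hχ1 : ∀ s : ℝ, |s| ≤ 1 / 2 → χ₀ s = 1) (hχ0 : ∀ s : ℝ, 1 ≤ |s| → χ₀ s = 0) :
    ∃ L : ℂ, Tendsto
      (fun ε : ℝ => ∫ s : ℝ, (χ₀ (ε * s) : ℂ) * Complex.exp (Complex.I * a * s ^ 2) * w s)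
      (nhdsWithin 0 (Set.Ioi 0)) (nhds L) := by
  classical
  show ∃ L : ℂ, Tendsto
      (fun ε : ℝ => ∫ s : ℝ, (χ₀ (ε * s) : ℂ) * OscReg.gph a s * w s)
      (nhdsWithin 0 (Set.Ioi 0)) (nhds L)
  have hw' : ContDiff ℝ ∞ w := hw
  have hχsm : ContDiff ℝ ∞ χ₀ := hχsmooth
  -- bounds on the derivatives of the cutoff
  have hχiter_supp : ∀ i : ℕ, HasCompactSupport (iteratedDeriv i χ₀) := by
    intro i
    induction i with
    | zero => simpa using hχsupp
    | succ i ih => rw [iteratedDeriv_succ]; exact ih.deriv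
  have hχball : ∀ i : ℕ, ∃ b : ℝ, 0 ≤ b ∧ ∀ x : ℝ, ‖iteratedDeriv i χ₀ x‖ ≤ b := by
    intro i
    obtain ⟨c, hc⟩ := (hχiter_supp i).exists_bound_of_continuous
      (hχsm.continuous_iteratedDeriv i (OscReg.coe_le_infty i))
    exact ⟨max c 0, le_max_right _ _, fun x => (hc x).trans (le_max_left _ _)⟩
  choose B hB0 hB using hχball
  -- bounds on w with nonneg constants
  choose Cw hCw using hwbound
  set Cw' : ℕ → ℝ := fun j => max (Cw j) 0 with hCw'def
  have hCw'0 : ∀ j, 0 ≤ Cw' j := fun j => le_max_right _ _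
  have hCw' : ∀ j : ℕ, ∀ s : ℝ, ‖iteratedDeriv j w s‖ ≤ Cw' j * (1 + |s|) ^ M := by
    intro j s
    exact (hCw j s).trans
      (mul_le_mul_of_nonneg_right (le_max_left _ _) (by positivity))
  -- bounds on 1 - χ₀
  have h1χ : ∀ i : ℕ, ∀ x : ℝ, ‖iteratedDeriv i (fun s => 1 - χ₀ s) x‖ ≤ 1 + B i := by
    intro i x
    cases i with
    | zero =>
      simp only [iteratedDeriv_zero]
      have h0 := hB 0 x
      simp only [iteratedDeriv_zero] at h0
      calc ‖1 - χ₀ x‖ ≤ ‖(1:ℝ)‖ + ‖χ₀ x‖ := norm_sub_le _ _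
        _ ≤ 1 + B 0 := by rw [norm_one]; linarith
    | succ i =>
      have hde : deriv (fun s : ℝ => 1 - χ₀ s) = fun s => -(deriv χ₀ s) := by
        funext y; rw [deriv_const_sub]
      have hx : iteratedDeriv (i+1) (fun s : ℝ => 1 - χ₀ s) x
          = -(iteratedDeriv (i+1) χ₀ x) := by
        rw [iteratedDeriv_succ', hde]
        rw [show (fun s : ℝ => -(deriv χ₀ s)) = fun s => -((deriv χ₀) s) from rfl]
        rw [iteratedDeriv_fun_neg, ← iteratedDeriv_succ']
      rw [hx, norm_neg]
      linarith [hB (i+1) x]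
  have h1χsm : ContDiff ℝ ∞ (fun s : ℝ => 1 - χ₀ s) := contDiff_const.sub hχsm
  -- the fixed amplitude away from the origin
  set v : ℝ → ℂ := fun s => ((1 - χ₀ s : ℝ) : ℂ) * w s with hvdef
  have hv_sm : ContDiff ℝ ∞ v := by
    apply ContDiff.mul _ hw'
    exact Complex.ofRealCLM.contDiff.comp h1χsm
  have hvb : ∀ r : ℕ, ∃ Cv : ℝ, 0 ≤ Cv ∧ ∀ s : ℝ,
      ‖iteratedDeriv r v s‖ ≤ Cv * (1 + |s|) ^ M := by
    intro r
    refine ⟨∑ i ∈ Finset.range (r+1), (r.choose i : ℝ) * (1 + B i) * Cw' (r - i),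
      Finset.sum_nonneg fun i _ => by have h1 := hB0 i; have h2 := hCw'0 (r - i); positivity,
      ?_⟩
    intro s
    rw [← norm_iteratedFDeriv_eq_norm_iteratedDeriv]
    have hmul := norm_iteratedFDeriv_mul_le (𝕜 := ℝ)
      (f := fun s : ℝ => ((1 - χ₀ s : ℝ) : ℂ)) (g := w)
      (Complex.ofRealCLM.contDiff.comp h1χsm) hw' s (OscReg.coe_le_infty r)
    refine le_trans hmul (le_trans (Finset.sum_le_sum ?_) (le_of_eq (Finset.sum_mul _ _ _).symm))
    intro i hi
    have hf1 : ‖iteratedFDeriv ℝ i (fun s : ℝ => ((1 - χ₀ s : ℝ) : ℂ)) s‖ ≤ 1 + B i := by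
      rw [norm_iteratedFDeriv_eq_norm_iteratedDeriv,
        OscReg.norm_iteratedDeriv_ofReal _ h1χsm i s]
      exact h1χ i s
    have hf2 : ‖iteratedFDeriv ℝ (r - i) w s‖ ≤ Cw' (r - i) * (1 + |s|) ^ M := by
      rw [norm_iteratedFDeriv_eq_norm_iteratedDeriv]
      exact hCw' (r - i) s
    calc (r.choose i : ℝ) * ‖iteratedFDeriv ℝ i (fun s : ℝ => ((1 - χ₀ s : ℝ) : ℂ)) s‖ *
          ‖iteratedFDeriv ℝ (r - i) w s‖
        ≤ (r.choose i : ℝ) * (1 + B i) * (Cw' (r - i) * (1 + |s|) ^ M) := by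
          refine mul_le_mul (mul_le_mul_of_nonneg_left hf1 (by positivity)) hf2
            (norm_nonneg _) (by have := hB0 i; positivity)
      _ = (r.choose i : ℝ) * (1 + B i) * Cw' (r - i) * (1 + |s|) ^ M := by ring
  choose Cv hCv0 hCvb using hvb
  -- the family of truncated amplitudes
  set F : ℝ → ℝ → ℂ := fun ε s => ((χ₀ (ε * s) : ℝ) : ℂ) * v s with hFdef
  have hχε_sm : ∀ ε : ℝ, ContDiff ℝ ∞ (fun s : ℝ => χ₀ (ε * s)) := by
    intro ε
    exact hχsm.comp (contDiff_const.mul contDiff_id)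
  have hF_sm : ∀ ε : ℝ, ContDiff ℝ ∞ (F ε) := by
    intro ε
    exact (Complex.ofRealCLM.contDiff.comp (hχε_sm ε)).mul hv_sm
  have hF0 : ∀ ε : ℝ, ∀ s : ℝ, |s| < 1 / 2 → F ε s = 0 := by
    intro ε s hs
    have : χ₀ s = 1 := hχ1 s hs.le
    simp [hFdef, hvdef, this]
  -- uniform bounds for the family
  set CF : ℕ → ℝ := fun r => ∑ i ∈ Finset.range (r+1),
    (r.choose i : ℝ) * B i * Cv (r - i) with hCFdef
  have hFC : ∀ r : ℕ, ∀ s : ℝ, ∀ ε ∈ Set.Icc (0:ℝ) 1,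
      ‖iteratedDeriv r (F ε) s‖ ≤ CF r * (1 + |s|) ^ M := by
    intro r s ε hε
    rw [← norm_iteratedFDeriv_eq_norm_iteratedDeriv]
    have hmul := norm_iteratedFDeriv_mul_le (𝕜 := ℝ)
      (f := fun s : ℝ => ((χ₀ (ε * s) : ℝ) : ℂ)) (g := v)
      (Complex.ofRealCLM.contDiff.comp (hχε_sm ε)) hv_sm s (OscReg.coe_le_infty r)
    refine le_trans hmul (le_trans (Finset.sum_le_sum
      (g := fun i => (r.choose i : ℝ) * B i * Cv (r - i) * (1 + |s|) ^ M) ?_)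
      (le_of_eq ?_))
    · intro i hi
      have hχterm : ‖iteratedFDeriv ℝ i (fun s : ℝ => ((χ₀ (ε * s) : ℝ) : ℂ)) s‖ ≤ B i := by
        rw [norm_iteratedFDeriv_eq_norm_iteratedDeriv,
          OscReg.norm_iteratedDeriv_ofReal _ (hχε_sm ε) i s]
        have hscal : iteratedDeriv i (fun s : ℝ => χ₀ (ε * s))
            = fun x => ε ^ i • iteratedDeriv i χ₀ (ε * x) :=
          iteratedDeriv_comp_const_smul (hχsm.of_le (OscReg.coe_le_infty i)) ε
        rw [hscal]
        have : ‖ε ^ i • iteratedDeriv i χ₀ (ε * s)‖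
            = |ε| ^ i * ‖iteratedDeriv i χ₀ (ε * s)‖ := by
          rw [norm_smul, Real.norm_eq_abs, abs_pow]
        rw [this]
        have hε1 : |ε| ≤ 1 := by
          rw [abs_of_nonneg hε.1]; exact hε.2
        calc |ε| ^ i * ‖iteratedDeriv i χ₀ (ε * s)‖
            ≤ 1 * B i := by
              refine mul_le_mul (pow_le_one₀ (abs_nonneg _) hε1) (hB i _)
                (norm_nonneg _) zero_le_one
          _ = B i := one_mul _
      have hvterm : ‖iteratedFDeriv ℝ (r - i) v s‖ ≤ Cv (r - i) * (1 + |s|) ^ M := by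
        rw [norm_iteratedFDeriv_eq_norm_iteratedDeriv]
        exact hCvb (r - i) s
      calc (r.choose i : ℝ) * ‖iteratedFDeriv ℝ i (fun s : ℝ => ((χ₀ (ε * s) : ℝ) : ℂ)) s‖ *
            ‖iteratedFDeriv ℝ (r - i) v s‖
          ≤ (r.choose i : ℝ) * B i * (Cv (r - i) * (1 + |s|) ^ M) := by
            refine mul_le_mul (mul_le_mul_of_nonneg_left hχterm (by positivity)) hvterm
              (norm_nonneg _) ?_
            have := hB0 i
            positivity
        _ = (r.choose i : ℝ) * B i * Cv (r - i) * (1 + |s|) ^ M := by ring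
    · show _ = CF r * (1 + |s|) ^ M
      simp only [hCFdef]
      exact (Finset.sum_mul _ _ _).symm
  -- apply the iterated integration-by-parts estimates with M + 2 steps
  set K : ℕ → ℝ := (OscReg.nextC a)^[M+2] CF with hKdef
  set Φ : ℝ → ℝ → ℂ := fun ε => (OscReg.T a)^[M+2] (F ε) with hΦdef
  have hΦ_sm : ∀ ε : ℝ, ContDiff ℝ ∞ (Φ ε) :=
    fun ε => (OscReg.Titer_sz a (M+2) (hF_sm ε) (hF0 ε)).1
  have hΦ0 : ∀ ε : ℝ, ∀ s : ℝ, |s| < 1 / 2 → Φ ε s = 0 :=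
    fun ε => (OscReg.Titer_sz a (M+2) (hF_sm ε) (hF0 ε)).2
  have hΦbound : ∀ ε ∈ Set.Icc (0:ℝ) 1, ∀ s : ℝ, 1 / 2 ≤ |s| →
      ‖Φ ε s‖ ≤ K 0 * (1 + |s|) ^ M / |s| ^ (M+2) := by
    intro ε hε s hs
    have := OscReg.Titer_bound a M (M+2) (hF_sm ε) (hF0 ε)
      (fun r s hs' => hFC r s ε hε) 0 s hs
    rw [iteratedDeriv_zero] at this; exact this
  -- the dominating function
  set c₀ : ℝ := 5 * 3 ^ M * max (K 0) 0 with hc₀def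
  have hc₀ : 0 ≤ c₀ := by positivity
  have hdom : ∀ ε ∈ Set.Icc (0:ℝ) 1, ∀ s : ℝ,
      ‖Φ ε s * OscReg.gph a s‖ ≤ c₀ * (1 + s ^ 2)⁻¹ := by
    intro ε hε s
    rw [norm_mul, OscReg.norm_gph, mul_one]
    rcases lt_or_ge |s| (1/2) with hs | hs
    · rw [hΦ0 ε s hs, norm_zero]
      positivity
    · have hs0 : (0:ℝ) < |s| := lt_of_lt_of_le (by norm_num) hs
      have hsq : (0:ℝ) < s ^ 2 := by
        rw [← sq_abs]; positivity
      have h1 := hΦbound ε hε s hs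
      have h2 : (1 + |s|) ^ M ≤ 3 ^ M * |s| ^ M := by
        rw [← mul_pow]
        exact pow_le_pow_left₀ (by positivity) (by linarith) M
      have h3 : K 0 * (1 + |s|) ^ M / |s| ^ (M+2)
          ≤ max (K 0) 0 * (3 ^ M * |s| ^ M) / |s| ^ (M+2) := by
        gcongr
        · exact le_max_left _ _
      have h4 : max (K 0) 0 * (3 ^ M * |s| ^ M) / |s| ^ (M+2)
          = max (K 0) 0 * 3 ^ M * (s ^ 2)⁻¹ := by
        rw [pow_add, sq_abs]
        have hpM : (|s| : ℝ) ^ M ≠ 0 := by positivity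
        have hs2 : s ^ 2 ≠ 0 := hsq.ne'
        field_simp
      have h5 : max (K 0) 0 * 3 ^ M * (s ^ 2)⁻¹ ≤ c₀ * (1 + s ^ 2)⁻¹ := by
        rw [hc₀def, inv_eq_one_div, inv_eq_one_div, mul_one_div, mul_one_div,
          div_le_div_iff₀ hsq (by positivity)]
        have h6 : 1 ≤ 4 * s ^ 2 := by
          rw [← sq_abs]
          nlinarith [sq_nonneg (|s| - 1/2)]
        have h7 : (0:ℝ) ≤ max (K 0) 0 * 3 ^ M := by positivity
        nlinarith
      exact le_trans h1 (le_trans h3 (le_of_eq h4 |>.trans h5))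
  -- dominated convergence
  have hmeasg : Continuous (OscReg.gph a) := OscReg.gph_cont a
  have hJ : Tendsto (fun ε : ℝ => ∫ s : ℝ, Φ ε s * OscReg.gph a s)
      (nhdsWithin 0 (Set.Ioi 0)) (nhds (∫ s : ℝ, Φ 0 s * OscReg.gph a s)) := by
    apply tendsto_integral_filter_of_dominated_convergence (fun s : ℝ => c₀ * (1 + s ^ 2)⁻¹)
    · exact Eventually.of_forall fun ε =>
        (((hΦ_sm ε).continuous.mul hmeasg).aestronglyMeasurable)
    · filter_upwards [Ioo_mem_nhdsGT (by norm_num : (0:ℝ) < 1)] with ε hε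
      exact ae_of_all _ fun s => hdom ε ⟨hε.1.le, hε.2.le⟩ s
    · exact (integrable_inv_one_add_sq).const_mul c₀
    · refine ae_of_all _ fun s => ?_
      have heq : ∀ᶠ ε in nhdsWithin (0:ℝ) (Set.Ioi 0),
          Φ 0 s * OscReg.gph a s = Φ ε s * OscReg.gph a s := by
        have hδ : (0:ℝ) < (2 * (|s| + 1))⁻¹ := by positivity
        filter_upwards [Ioo_mem_nhdsGT hδ] with ε hε
        have hloc : ∀ t ∈ Set.Ioo (-(|s| + 1)) (|s| + 1), F ε t = F 0 t := by
          intro t ht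
          have habs : |t| < |s| + 1 := abs_lt.mpr ⟨ht.1, ht.2⟩
          have hεt : |ε * t| ≤ 1 / 2 := by
            rw [abs_mul, abs_of_nonneg hε.1.le]
            have h1 : ε * |t| ≤ (2 * (|s| + 1))⁻¹ * (|s| + 1) := by
              have hpos : (0:ℝ) < |s| + 1 := by positivity
              have e1 : ε * |t| ≤ ε * (|s| + 1) :=
                mul_le_mul_of_nonneg_left habs.le hε.1.le
              have e2 : ε * (|s| + 1) ≤ (2 * (|s| + 1))⁻¹ * (|s| + 1) :=
                mul_le_mul_of_nonneg_right hε.2.le hpos.le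
              linarith
            have h2 : (2 * (|s| + 1))⁻¹ * (|s| + 1) = 1 / 2 := by
              field_simp
            linarith
          have hε1 : χ₀ (ε * t) = 1 := hχ1 _ hεt
          have hε2 : χ₀ (0:ℝ) = 1 := hχ1 0 (by norm_num)
          simp [hFdef, hε1, hε2]
        have hφeq : Φ ε s = Φ 0 s := OscReg.Titer_local a (M+2) isOpen_Ioo hloc s
          (by constructor <;> [linarith [neg_abs_le s]; linarith [le_abs_self s]])
        rw [hφeq]
      exact (tendsto_const_nhds).congr' heq
  -- splitting off the compactly supported part near the origin
  have hχCsupp : HasCompactSupport (fun s : ℝ => ((χ₀ s : ℝ) : ℂ)) :=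
    hχsupp.comp_left Complex.ofReal_zero
  have hwcont : Continuous w := hw'.continuous
  have hχcont : Continuous χ₀ := hχsm.continuous
  have hAint : Integrable (fun s : ℝ => (χ₀ s : ℂ) * (OscReg.gph a s * w s)) := by
    apply Continuous.integrable_of_hasCompactSupport
    · fun_prop
    · exact hχCsupp.mul_right
  set A : ℂ := ∫ s : ℝ, (χ₀ s : ℂ) * (OscReg.gph a s * w s) with hAdef
  have hevI : ∀ᶠ ε in nhdsWithin (0:ℝ) (Set.Ioi 0),
      (∫ s : ℝ, (χ₀ (ε * s) : ℂ) * OscReg.gph a s * w s)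
        = A + ∫ s : ℝ, Φ ε s * OscReg.gph a s := by
    filter_upwards [Ioo_mem_nhdsGT (by norm_num : (0:ℝ) < 1/2)] with ε hε
    have hε0 : 0 < ε := hε.1
    have hχεC : HasCompactSupport (fun s : ℝ => χ₀ (ε * s)) := by
      apply HasCompactSupport.intro (isCompact_Icc (a := -(ε⁻¹)) (b := ε⁻¹))
      intro x hx
      apply hχ0
      simp only [Set.mem_Icc, not_and_or, not_le] at hx
      have hxabs : ε⁻¹ < |x| := by
        rcases hx with hx | hx
        · rw [abs_of_neg (by nlinarith [inv_pos.mpr hε0])]; linarith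
        · calc ε⁻¹ < x := hx
            _ ≤ |x| := le_abs_self x
      rw [abs_mul, abs_of_pos hε0]
      calc (1:ℝ) = ε * ε⁻¹ := by field_simp
        _ ≤ ε * |x| := by
          exact mul_le_mul_of_nonneg_left hxabs.le hε0.le
    have hFεC : HasCompactSupport (F ε) :=
      (hχεC.comp_left Complex.ofReal_zero).mul_right
    have hP1int : Integrable
        (fun s : ℝ => (χ₀ s : ℂ) * ((χ₀ (ε * s) : ℂ) * OscReg.gph a s * w s)) := by
      apply Continuous.integrable_of_hasCompactSupport
      · fun_prop
      · exact hχCsupp.mul_right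
    have hP2int : Integrable (fun s : ℝ => F ε s * OscReg.gph a s) := by
      apply Continuous.integrable_of_hasCompactSupport
      · exact (hF_sm ε).continuous.mul hmeasg
      · exact hFεC.mul_right
    have hsplit : (fun s : ℝ => (χ₀ (ε * s) : ℂ) * OscReg.gph a s * w s)
        = fun s : ℝ => (χ₀ s : ℂ) * ((χ₀ (ε * s) : ℂ) * OscReg.gph a s * w s)
            + F ε s * OscReg.gph a s := by
      funext s
      rw [hFdef, hvdef]
      push_cast
      ring
    rw [hsplit, integral_add hP1int hP2int]
    congr 1
    · -- the first piece is the constant A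
      rw [hAdef]
      apply integral_congr_ae (ae_of_all _ ?_)
      intro s
      by_cases hs : χ₀ s = 0
      · simp [hs]
      · have hs1 : |s| < 1 := by
          by_contra h
          exact hs (hχ0 s (not_lt.mp h))
        have hεs : χ₀ (ε * s) = 1 := by
          apply hχ1
          rw [abs_mul, abs_of_pos hε0]
          nlinarith [abs_nonneg s, hε.2]
        rw [hεs]
        push_cast
        ring
    · exact OscReg.ibp_iter a ha (M+2) (hF_sm ε) (hF0 ε) hFεC
  refine ⟨A + ∫ s : ℝ, Φ 0 s * OscReg.gph a s, ?_⟩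
  have hfinal := (tendsto_const_nhds (x := A)).add hJ
  refine hfinal.congr' ?_
  filter_upwards [hevI] with ε h
  exact h.symm
end
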